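/- arXiv:2004.05321 — 6 statements merged into one kernel-verified Lean document; each statement's English description precedes it below -/
import Mathlib

section
/- Let X be a topological space and let 𝓘 be an ideal of compact sets in X. Let Y = ⨁_{n∈ω} X_n be the direct topological sum of countably many copies X_n = X of X, and let 𝓘(Y) be the family of all compact subsets F of Y such that F ∩ X_n ∈ 𝓘 for every n ∈ ω (so 𝓘(Y) is an ideal of compact sets in Y). Then X has property γ_𝓘 if and only if Y has property γ_{𝓘(Y)}. -/
open Set Filter Topology TopologicalSpace

universe u v

/-- An ideal of compact sets in a topological space `X`. -/
structure IsCompactIdeal (X : Type u) [TopologicalSpace X] (I : Set (Set X)) : Prop where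
  isCompact : ∀ A ∈ I, IsCompact A
  sUnion_eq : ⋃₀ I = Set.univ
  union_mem : ∀ A ∈ I, ∀ B ∈ I, A ∪ B ∈ I
  inter_compact_mem : ∀ A ∈ I, ∀ K : Set X, IsCompact K → A ∩ K ∈ I

/-- `γ` is an `I`-cover of `X`. -/
def IsIdealCover {X : Type u} (I : Set (Set X)) (γ : Set (Set X)) : Prop :=
  ∀ A ∈ I, ∃ U ∈ γ, A ⊆ U

/-- `C` is an `I`-sequence in `X`. -/
def IsIdealSeq {X : Type u} (I : Set (Set X)) (C : ℕ → Set X) : Prop :=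
  ∀ A ∈ I, ∃ m : ℕ, ∀ n ≥ m, A ⊆ C n

/-- The property `γ_I`: every open `I`-cover contains an `I`-sequence. -/
def GammaIdeal (X : Type u) [TopologicalSpace X] (I : Set (Set X)) : Prop :=
  ∀ γ : Set (Set X), (∀ U ∈ γ, IsOpen U) → IsIdealCover I γ →
    ∃ C : ℕ → Set X, (∀ n, C n ∈ γ) ∧ IsIdealSeq I C

/-- `γ` is an ω-cover of `X`: every finite set is contained in a member. -/
def IsOmegaCover {X : Type u} (γ : Set (Set X)) : Prop :=
  ∀ F : Set X, F.Finite → ∃ U ∈ γ, F ⊆ U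

/-- The property `γ`: every open ω-cover contains a sequence in which every point
eventually lies. -/
def GammaP (X : Type u) [TopologicalSpace X] : Prop :=
  ∀ γ : Set (Set X), (∀ U ∈ γ, IsOpen U) → IsOmegaCover γ →
    ∃ C : ℕ → Set X, (∀ n, C n ∈ γ) ∧ ∀ x : X, ∃ m : ℕ, ∀ n ≥ m, x ∈ C n

/-- The property `φ`. -/
def PhiP (X : Type u) [TopologicalSpace X] : Prop :=
  ∀ η : ℕ → Set (Set X),
    (∀ n, ∀ U ∈ η n, IsOpen U) →
    (∀ n, ∀ U ∈ η n, ∃ V ∈ η (n + 1), U ⊆ V) →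
    IsOmegaCover (⋃ n, η n) →
    ∃ C : ℕ → Set X, (∀ x : X, ∃ m : ℕ, ∀ n ≥ m, x ∈ C n) ∧
      ∀ n, ∀ F : Set X, F.Finite → F ⊆ C n → ∃ U ∈ η n, F ⊆ U

/-- The property `φ_I`. -/
def PhiIdeal (X : Type u) [TopologicalSpace X] (I : Set (Set X)) : Prop :=
  ∀ η : ℕ → Set (Set X),
    (∀ n, ∀ U ∈ η n, IsOpen U) →
    (∀ n, ∀ U ∈ η n, ∃ V ∈ η (n + 1), U ⊆ V) →
    IsIdealCover I (⋃ n, η n) →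
    ∃ C : ℕ → Set X, IsIdealSeq I C ∧
      ∀ n, ∀ A ∈ I, A ⊆ C n → ∃ U ∈ η n, A ⊆ U

/-- The `I`-open topology on `Y^X`, generated by the sets `[K;U] = {f | f(K) ⊆ U}`
for `K ∈ I` and `U ⊆ Y` open. -/
def idealOpenTopology {X : Type u} [TopologicalSpace X] (I : Set (Set X))
    (Y : Type v) [TopologicalSpace Y] : TopologicalSpace (X → Y) :=
  TopologicalSpace.generateFrom
    {S : Set (X → Y) | ∃ K ∈ I, ∃ U : Set Y, IsOpen U ∧ S = {f : X → Y | Set.MapsTo f K U}}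

/-- Type synonym for `X → Y` carrying the `I`-open topology. -/
def IdealFn (X : Type u) (Y : Type v) [TopologicalSpace X] [TopologicalSpace Y]
    (I : Set (Set X)) : Type (max u v) := X → Y

instance IdealFn.instTopologicalSpace {X : Type u} {Y : Type v} [TopologicalSpace X]
    [TopologicalSpace Y] (I : Set (Set X)) : TopologicalSpace (IdealFn X Y I) :=
  idealOpenTopology I Y

/-- `X` is `Y_I`-Tychonoff. -/
def IdealYTychonoff (X : Type u) (Y : Type v) [TopologicalSpace X] [TopologicalSpace Y]
    (I : Set (Set X)) : Prop :=
  ∀ A : Set X, IsClosed A → ∀ y₀ : Y, ∀ F ∈ I, F ⊆ Aᶜ →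
    ∀ f : F → Y, Continuous f → (Set.range f).Finite →
      ∃ g : X → Y, Continuous g ∧ (∀ x : F, g x.1 = f x) ∧ g '' A ⊆ {y₀}

/-- `X` is `Y`-Tychonoff (the case of the ideal of finite sets, with arbitrary
functions on finite sets). -/
def YTychonoff (X : Type u) (Y : Type v) [TopologicalSpace X] [TopologicalSpace Y] : Prop :=
  ∀ A : Set X, IsClosed A → ∀ y₀ : Y, ∀ F : Set X, F.Finite → F ⊆ Aᶜ →
    ∀ f : F → Y, ∃ g : X → Y, Continuous g ∧ (∀ x : F, g x.1 = f x) ∧ g '' A ⊆ {y₀}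

/-- `H` is a relatively `D_I`-Tychonoff subspace of `S ⊆ Y^X`. -/
def RelTychonoffSub {X : Type u} {Y : Type v} [TopologicalSpace X]
    (I : Set (Set X)) (D : Set Y) (H S : Set (X → Y)) : Prop :=
  ∀ A : Set X, IsClosed A → ∀ F ∈ I, F ⊆ Aᶜ → ∀ y₀ ∈ D, ∀ f ∈ S,
    (f '' F).Finite → f '' F ⊆ D →
      ∃ g ∈ H, Set.EqOn g f F ∧ g '' A ⊆ {y₀}

/-- `Z` is a k-space: for every non-closed `A ⊆ Z` there is a compact `K` such that
`A ∩ K` is not closed in `K`. -/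
def IsKSpace (Z : Type u) [TopologicalSpace Z] : Prop :=
  ∀ A : Set Z, ¬ IsClosed A → ∃ K : Set Z, IsCompact K ∧
    ¬ IsClosed (Subtype.val ⁻¹' A : Set K)

/-- `Z` has countable tightness. -/
def HasCountableTightness (Z : Type u) [TopologicalSpace Z] : Prop :=
  ∀ (A : Set Z) (z : Z), z ∈ closure A → ∃ B ⊆ A, B.Countable ∧ z ∈ closure B

/-- `⋃_n ⋂_{i ≥ n} U i`, the set of points eventually in all `U i`. -/
def seqLimInf {X : Type u} (U : ℕ → Set X) : Set X :=
  ⋃ n, ⋂ i, ⋂ (_ : n ≤ i), U i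

/-- A zero-set in `X`. -/
def IsZeroSet {X : Type u} [TopologicalSpace X] (F : Set X) : Prop :=
  ∃ f : X → ℝ, Continuous f ∧ F = f ⁻¹' {0}

/-- The Baire topology on `X`, with the zero-sets as a base. -/
def baireTopology (X : Type u) [TopologicalSpace X] : TopologicalSpace X :=
  TopologicalSpace.generateFrom {F : Set X | IsZeroSet F}

/-- `X` is `Y`-z-Tychonoff. -/
def YzTychonoff (X : Type u) (Y : Type v) [TopologicalSpace X] [TopologicalSpace Y] : Prop :=
  (T1Space X ∧ CompletelyRegularSpace X) ∧
  ∀ A : Set X, IsClosed A → ∀ n : ℕ, ∀ F : Fin n → Set X,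
    (∀ i, IsZeroSet (F i)) → (∀ i j, i ≠ j → Disjoint (F i) (F j)) →
    (⋃ i, F i) ⊆ Aᶜ → ∀ y₀ : Y, ∀ y : Fin n → Y,
      ∃ f : X → Y, Continuous f ∧ f '' A ⊆ {y₀} ∧ ∀ i, f '' (F i) ⊆ {y i}

/-- `X` is `Y`-normal. -/
def YNormal (X : Type u) (Y : Type v) [TopologicalSpace X] [TopologicalSpace Y] : Prop :=
  T1Space X ∧
  ∀ F : Set X, IsClosed F → ∀ f : F → Y, Continuous f → (Set.range f).Finite →
    ∃ g : X → Y, Continuous g ∧ ∀ x : F, g x.1 = f x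

/-- `X` is `Y`-z-normal. -/
def YzNormal (X : Type u) (Y : Type v) [TopologicalSpace X] [TopologicalSpace Y] : Prop :=
  (T1Space X ∧ CompletelyRegularSpace X) ∧
  ∀ F : Set X, IsZeroSet F → ∀ f : F → Y, Continuous f → (Set.range f).Finite →
    ∃ g : X → Y, Continuous g ∧ ∀ x : F, g x.1 = f x

/-- `f n` stably converges to `g`. -/
def StablyConvergesTo {X : Type u} {Y : Type v} (f : ℕ → X → Y) (g : X → Y) : Prop :=
  ∀ x : X, {n : ℕ | f n x ≠ g x}.Finite

/-- The stable Baire class one functions `B₁ˢᵗ(X,Y)`. -/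
def BaireOneStable (X : Type u) (Y : Type v) [TopologicalSpace X] [TopologicalSpace Y] :
    Set (X → Y) :=
  {g | ∃ f : ℕ → X → Y, (∀ n, Continuous (f n)) ∧ StablyConvergesTo f g}

/-- The Baire class one functions `B₁(X,Y)`, pointwise limits of sequences of
continuous functions. -/
def BaireOne (X : Type u) (Y : Type v) [TopologicalSpace X] [TopologicalSpace Y] :
    Set (X → Y) :=
  {g | ∃ f : ℕ → X → Y, (∀ n, Continuous (f n)) ∧
    ∀ x : X, Filter.Tendsto (fun n => f n x) Filter.atTop (nhds (g x))}

/-- The Baire functions `B(X,Y) = ⋃_{α<ω₁} B_α(X,Y)`: the smallest family containing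
the continuous functions and closed under pointwise limits of sequences. -/
inductive IsBaireFun (X : Type u) (Y : Type v) [TopologicalSpace X] [TopologicalSpace Y] :
    (X → Y) → Prop
  | cont (f : X → Y) : Continuous f → IsBaireFun X Y f
  | limit (f : ℕ → X → Y) (g : X → Y) : (∀ n, IsBaireFun X Y (f n)) →
      (∀ x : X, Filter.Tendsto (fun n => f n x) Filter.atTop (nhds (g x))) →
      IsBaireFun X Y g

/-- `Z` is scattered: every nonempty subset has an isolated point. -/
def IsScatteredSpace (Z : Type u) [TopologicalSpace Z] : Prop :=
  ∀ S : Set Z, S.Nonempty → ∃ x ∈ S, ∃ U : Set Z, IsOpen U ∧ U ∩ S = {x}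

/-- The subspace `K` of `X` is scattered. -/
def IsScatteredSubset {X : Type u} [TopologicalSpace X] (K : Set X) : Prop :=
  ∀ S : Set X, S ⊆ K → S.Nonempty → ∃ x ∈ S, ∃ U : Set X, IsOpen U ∧ U ∩ S = {x}

/-- The tightness `t(Z)`: the least infinite cardinal `κ` such that whenever
`z ∈ closure A` there is `B ⊆ A` with `#B ≤ κ` and `z ∈ closure B`. -/
noncomputable def tightnessCard (Z : Type u) [TopologicalSpace Z] : Cardinal.{u} :=
  sInf {κ : Cardinal.{u} | Cardinal.aleph0 ≤ κ ∧ ∀ (A : Set Z) (z : Z), z ∈ closure A →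
    ∃ B : Set Z, B ⊆ A ∧ Cardinal.mk B ≤ κ ∧ z ∈ closure B}

/-- The `I`-Lindelöf degree of `X`: the least infinite cardinal `κ` such that every
open `I`-cover has an `I`-subcover of cardinality `≤ κ`. -/
noncomputable def idealLindelofDeg (X : Type u) [TopologicalSpace X] (I : Set (Set X)) :
    Cardinal.{u} :=
  sInf {κ : Cardinal.{u} | Cardinal.aleph0 ≤ κ ∧ ∀ γ : Set (Set X), (∀ U ∈ γ, IsOpen U) →
    IsIdealCover I γ → ∃ γ' : Set (Set X), γ' ⊆ γ ∧ Cardinal.mk γ' ≤ κ ∧ IsIdealCover I γ'}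

section AuxForStatementZero

variable {X : Type u} [TopologicalSpace X] {I : Set (Set X)}

private lemma gammaIdeal_I_nonempty (h : GammaIdeal X I) : I.Nonempty := by
  by_contra hne
  rw [Set.not_nonempty_iff_eq_empty] at hne
  obtain ⟨C, hC, -⟩ := h ∅ (by simp) (by simp [IsIdealCover, hne])
  exact absurd (hC 0) (Set.notMem_empty _)

private lemma empty_mem_of_nonempty (hI : IsCompactIdeal X I) (h : I.Nonempty) : ∅ ∈ I := by
  obtain ⟨A, hA⟩ := h
  simpa using hI.inter_compact_mem A hA ∅ isCompact_empty

private lemma biUnion_mem_ideal (hI : IsCompactIdeal X I) (h0 : ∅ ∈ I)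
    {s : Set ℕ} (hs : s.Finite) (g : ℕ → Set X) (hg : ∀ n ∈ s, g n ∈ I) :
    (⋃ n ∈ s, g n) ∈ I := by
  refine Set.Finite.induction_on
    (motive := fun s _ => (∀ n ∈ s, g n ∈ I) → (⋃ n ∈ s, g n) ∈ I) s hs ?_ ?_ hg
  · intro _; simpa using h0
  · intro a t ha ht ih hg'
    rw [Set.biUnion_insert]
    exact hI.union_mem _ (hg' a (Set.mem_insert _ _)) _
      (ih fun n hn => hg' n (Set.mem_insert_of_mem _ hn))

/-- The key Gerlits–Nagy style diagonalization: from a γ_I space and a nested sequence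
of open I-covers, one can select one member from each cover forming an I-sequence. -/
private lemma gamma_nested_selection (h : GammaIdeal X I)
    (V : ℕ → Set (Set X))
    (hop : ∀ k, ∀ S ∈ V k, IsOpen S)
    (hcov : ∀ k, IsIdealCover I (V k))
    (hnest : ∀ k, V (k + 1) ⊆ V k) :
    ∃ W : ℕ → Set X, (∀ n, W n ∈ V n) ∧ IsIdealSeq I W := by
  classical
  have hmono : ∀ a b : ℕ, a ≤ b → V b ⊆ V a := by
    intro a b hab
    induction b, hab using Nat.le_induction with
    | base => exact fun _ hS => hS
    | succ n hn ih => exact fun S hS => ih (hnest n hS)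
  by_cases htriv : ∀ k, ∃ S ∈ V k, ∀ A ∈ I, A ⊆ S
  · choose S hS hSall using htriv
    exact ⟨S, hS, fun A hA => ⟨0, fun n _ => hSall n A hA⟩⟩
  · push_neg at htriv
    obtain ⟨N, hN⟩ := htriv
    obtain ⟨C, hCmem, hCseq⟩ := h (V N) (hop N) (hcov N)
    set ε : Set (Set X) := {S | ∃ j : ℕ, ∃ T ∈ V (N + j), S = C j ∩ T} with hεdef
    have hεop : ∀ S ∈ ε, IsOpen S := by
      rintro S ⟨j, T, hT, rfl⟩
      exact (hop N _ (hCmem j)).inter (hop _ _ hT)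
    have hεcov : IsIdealCover I ε := by
      intro A hA
      obtain ⟨m, hm⟩ := hCseq A hA
      obtain ⟨T, hT, hAT⟩ := hcov (N + m) A hA
      exact ⟨C m ∩ T, ⟨m, T, hT, rfl⟩, Set.subset_inter (hm m le_rfl) hAT⟩
    obtain ⟨D, hDmem, hDseq⟩ := h ε hεop hεcov
    choose j T hTmem hDeq using hDmem
    have hfin : ∀ n, {r : ℕ | j r = n}.Finite := by
      intro n
      by_contra hinf
      have hinf' : {r : ℕ | j r = n}.Infinite := hinf
      obtain ⟨A, hAI, hAn⟩ := hN (C n) (hCmem n)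
      obtain ⟨m, hm⟩ := hDseq A hAI
      obtain ⟨r, hr, hrm⟩ := hinf'.exists_gt m
      refine hAn ?_
      have h1 : A ⊆ D r := hm r (le_of_lt hrm)
      rw [hDeq r] at h1
      have h2 : A ⊆ C (j r) := h1.trans Set.inter_subset_left
      rwa [hr] at h2
    have hbig : ∀ n : ℕ, ∃ r, n ≤ r ∧ n ≤ j r := by
      intro n
      have hsub : {r : ℕ | j r < n} ⊆ ⋃ i ∈ Set.Iio n, {r : ℕ | j r = i} := by
        intro r hr
        exact Set.mem_biUnion hr rfl
      have hf : {r : ℕ | j r < n}.Finite :=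
        ((Set.finite_Iio n).biUnion fun i _ => hfin i).subset hsub
      obtain ⟨b, hb⟩ := hf.bddAbove
      refine ⟨max n (b + 1), le_max_left _ _, ?_⟩
      by_contra hlt
      push_neg at hlt
      have := hb (Set.mem_setOf.2 hlt)
      have := le_max_right n (b + 1)
      omega
    choose r hr1 hr2 using hbig
    refine ⟨fun n => T (r n), fun n => hmono n (N + j (r n))
      (le_trans (hr2 n) (Nat.le_add_left _ _)) (hTmem (r n)), ?_⟩
    intro A hA
    obtain ⟨m, hm⟩ := hDseq A hA
    refine ⟨m, fun n hn => ?_⟩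
    have h1 : A ⊆ D (r n) := hm (r n) (le_trans hn (hr1 n))
    rw [hDeq (r n)] at h1
    exact h1.trans Set.inter_subset_right

private lemma sigma_compact_support {F : Set (Σ _ : ℕ, X)} (hF : IsCompact F) :
    ∃ N, ∀ p ∈ F, p.1 ≤ N := by
  have hop : ∀ k : ℕ, IsOpen {p : Σ _ : ℕ, X | p.1 ≤ k} := by
    intro k
    rw [isOpen_sigma_iff]
    intro n
    by_cases hn : n ≤ k
    · convert isOpen_univ using 1
      ext x; simp [hn]
    · convert isOpen_empty using 1
      ext x; simp [hn]
  have hcov : F ⊆ ⋃ k : ℕ, {p : Σ _ : ℕ, X | p.1 ≤ k} :=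
    fun p _ => Set.mem_iUnion.2 ⟨p.1, show p.1 ≤ p.1 from le_refl _⟩
  obtain ⟨t, ht⟩ := hF.elim_finite_subcover _ hop hcov
  refine ⟨t.sup id, fun p hp => ?_⟩
  obtain ⟨k, hk, hpk⟩ := Set.mem_iUnion₂.1 (ht hp)
  exact le_trans hpk (Finset.le_sup (f := id) hk)

end AuxForStatementZero

/-- `X` has property `γ_I` iff the countable direct topological sum of
copies of `X` has property `γ_{I(Y)}`. -/

theorem gammaIdeal_iff_gammaIdeal_sigma {X : Type u} [TopologicalSpace X]
    (I : Set (Set X)) (hI : IsCompactIdeal X I) :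
    GammaIdeal X I ↔
      GammaIdeal (Σ _ : ℕ, X)
        {F : Set (Σ _ : ℕ, X) | IsCompact F ∧ ∀ n : ℕ, Sigma.mk n ⁻¹' F ∈ I} := by
  classical
  set J : Set (Set (Σ _ : ℕ, X)) :=
    {F : Set (Σ _ : ℕ, X) | IsCompact F ∧ ∀ n : ℕ, Sigma.mk n ⁻¹' F ∈ I} with hJdef
  constructor
  · -- hard direction
    intro hX
    have h0I : ∅ ∈ I := empty_mem_of_nonempty hI (gammaIdeal_I_nonempty hX)
    intro γ hγop hγcov
    -- the "trace on the first k+1 coordinates" operation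
    set Tr : Set (Σ _ : ℕ, X) → ℕ → Set X :=
      fun W k => ⋂ n ∈ Set.Iic k, @Sigma.mk ℕ (fun _ => X) n ⁻¹' W with hTrdef
    set V : ℕ → Set (Set X) :=
      fun k => {S | ∃ W ∈ γ, ∃ m, k ≤ m ∧ S = Tr W m} with hVdef
    have hop : ∀ k, ∀ S ∈ V k, IsOpen S := by
      rintro k S ⟨W, hW, m, hm, rfl⟩
      exact (Set.finite_Iic m).isOpen_biInter fun n _ =>
        (hγop W hW).preimage continuous_sigmaMk
    have hcov : ∀ k, IsIdealCover I (V k) := by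
      intro k A hA
      have hE : (⋃ n ∈ Set.Iic k, @Sigma.mk ℕ (fun _ => X) n '' A) ∈ J := by
        constructor
        · exact (Set.finite_Iic k).isCompact_biUnion fun n _ =>
            (hI.isCompact A hA).image continuous_sigmaMk
        · intro n
          have hpre : Sigma.mk n ⁻¹' (⋃ m ∈ Set.Iic k, @Sigma.mk ℕ (fun _ => X) m '' A) =
              if n ≤ k then A else ∅ := by
            ext x
            simp only [Set.mem_preimage, Set.mem_iUnion, Set.mem_Iic, Set.mem_image]
            by_cases hn : n ≤ k
            · simp only [hn, if_true]
              constructor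
              · rintro ⟨m, hm, y, hy, hEq⟩
                obtain ⟨rfl, h2⟩ := Sigma.mk.inj_iff.1 hEq
                rwa [← eq_of_heq h2]
              · intro hx
                exact ⟨n, hn, x, hx, rfl⟩
            · simp only [hn, if_false, Set.mem_empty_iff_false, iff_false]
              rintro ⟨m, hm, y, hy, hEq⟩
              obtain ⟨rfl, -⟩ := Sigma.mk.inj_iff.1 hEq
              exact hn hm
          rw [hpre]
          split_ifs
          exacts [hA, h0I]
      obtain ⟨W, hW, hEW⟩ := hγcov _ hE
      refine ⟨Tr W k, ⟨W, hW, k, le_rfl, rfl⟩, ?_⟩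
      intro x hx
      refine Set.mem_iInter₂.2 fun n hn => ?_
      exact hEW (Set.mem_biUnion hn ⟨x, hx, rfl⟩)
    have hnest : ∀ k, V (k + 1) ⊆ V k := by
      rintro k S ⟨W, hW, m, hm, rfl⟩
      exact ⟨W, hW, m, by omega, rfl⟩
    obtain ⟨V', hV'mem, hV'seq⟩ := gamma_nested_selection hX V hop hcov hnest
    choose W hWγ m hm hVeq using hV'mem
    refine ⟨W, hWγ, ?_⟩
    rintro F ⟨hFc, hFfib⟩
    obtain ⟨Ns, hNs⟩ := sigma_compact_support hFc
    have hAI : (⋃ n ∈ Set.Iic Ns, Sigma.mk n ⁻¹' F) ∈ I :=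
      biUnion_mem_ideal hI h0I (Set.finite_Iic Ns) _ fun n _ => hFfib n
    obtain ⟨m₀, hm₀⟩ := hV'seq _ hAI
    refine ⟨max m₀ Ns, fun n hn => ?_⟩
    rintro ⟨i, x⟩ hp
    have hi : i ≤ Ns := hNs ⟨i, x⟩ hp
    have hx : x ∈ ⋃ l ∈ Set.Iic Ns, Sigma.mk l ⁻¹' F :=
      Set.mem_biUnion hi hp
    have h1 : x ∈ V' n := hm₀ n (le_trans (le_max_left _ _) hn) hx
    rw [hVeq n] at h1
    have him : i ≤ m n :=
      le_trans hi (le_trans (le_trans (le_max_right _ _) hn) (hm n))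
    exact Set.mem_iInter₂.1 h1 i (Set.mem_Iic.2 him)
  · -- easy direction
    intro hY
    have hIne : I.Nonempty := by
      by_contra hne
      rw [Set.not_nonempty_iff_eq_empty] at hne
      obtain ⟨C, hC, -⟩ := hY ∅ (by simp)
        (fun F hF => absurd (hF.2 0) (by simp [hne]))
      exact absurd (hC 0) (Set.notMem_empty _)
    have h0I : ∅ ∈ I := empty_mem_of_nonempty hI hIne
    intro γ hγop hγcov
    set L : Set X → Set (Σ _ : ℕ, X) := fun U => {p | p.2 ∈ U} with hLdef
    have hsnd : Continuous (fun p : (Σ _ : ℕ, X) => p.2) :=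
      continuous_sigma fun _ => continuous_id
    set γ' : Set (Set (Σ _ : ℕ, X)) := {S | ∃ U ∈ γ, S = L U} with hγ'def
    have hγ'op : ∀ S ∈ γ', IsOpen S := by
      rintro S ⟨U, hU, rfl⟩
      exact (hγop U hU).preimage hsnd
    have hγ'cov : IsIdealCover J γ' := by
      rintro F ⟨hFc, hFfib⟩
      obtain ⟨Ns, hNs⟩ := sigma_compact_support hFc
      have hAI : (⋃ n ∈ Set.Iic Ns, Sigma.mk n ⁻¹' F) ∈ I :=
        biUnion_mem_ideal hI h0I (Set.finite_Iic Ns) _ fun n _ => hFfib n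
      obtain ⟨U, hU, hAU⟩ := hγcov _ hAI
      refine ⟨L U, ⟨U, hU, rfl⟩, ?_⟩
      rintro ⟨i, x⟩ hp
      exact hAU (Set.mem_biUnion (hNs ⟨i, x⟩ hp) hp)
    obtain ⟨C, hCmem, hCseq⟩ := hY γ' hγ'op hγ'cov
    choose U hUγ hCeq using hCmem
    refine ⟨U, hUγ, ?_⟩
    intro A hA
    have hG : (@Sigma.mk ℕ (fun _ => X) 0 '' A) ∈ J := by
      constructor
      · exact (hI.isCompact A hA).image continuous_sigmaMk
      · intro n
        by_cases hn : n = 0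
        · subst hn
          rw [Set.preimage_image_eq A sigma_mk_injective]
          exact hA
        · have : Sigma.mk n ⁻¹' (@Sigma.mk ℕ (fun _ => X) 0 '' A) = ∅ := by
            ext x
            simp only [Set.mem_preimage, Set.mem_image, Set.mem_empty_iff_false, iff_false]
            rintro ⟨y, hy, hEq⟩
            exact hn (Sigma.mk.inj_iff.1 hEq).1.symm
          rw [this]
          exact h0I
    obtain ⟨m, hm⟩ := hCseq _ hG
    refine ⟨m, fun n hn x hx => ?_⟩
    have := hm n hn (Set.mem_image_of_mem _ hx)
    rw [hCeq n] at this
    exact this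
end

section
/- Let Y be a metric space containing at least two points, and let X be a Y_𝓘-Tychonoff space for some ideal 𝓘 of compact sets in X. If H is a relatively Y_𝓘-Tychonoff subspace of C_𝓘(X,Y), then the tightness of H equals the 𝓘-Lindelöf degree of X: t(H) = 𝓘-Lin(X). In particular, t(C_𝓘(X,Y)) = 𝓘-Lin(X). -/
open Set Filter Topology TopologicalSpace

universe u v

section Helpers

open Metric

universe w

variable {X Y : Type w} [TopologicalSpace X] [MetricSpace Y]

lemma IsCompactIdeal.empty_mem {I : Set (Set X)} (hI : IsCompactIdeal X I)
    (hne : I.Nonempty) : ∅ ∈ I := by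
  obtain ⟨K, hK⟩ := hne
  have := hI.inter_compact_mem K hK ∅ isCompact_empty
  simpa using this

lemma exists_eps {I : Set (Set X)} (hI : IsCompactIdeal X I) {f : X → Y}
    (hf : Continuous f) {K : Set X} (hK : K ∈ I) {V : Set Y} (hV : IsOpen V)
    (hfKV : Set.MapsTo f K V) :
    ∃ ε : ℝ, 0 < ε ∧ ∀ h : X → Y, (∀ x ∈ K, dist (h x) (f x) < ε) → Set.MapsTo f K V ∧
      Set.MapsTo h K V := by
  rcases K.eq_empty_or_nonempty with rfl | hKne
  · exact ⟨1, one_pos, fun h _ => ⟨hfKV, fun x hx => absurd hx (Set.notMem_empty x)⟩⟩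
  rcases Vᶜ.eq_empty_or_nonempty with hVc | hVc
  · have hVuniv : V = Set.univ := by
      simpa [Set.compl_empty_iff] using hVc
    exact ⟨1, one_pos, fun h _ => ⟨hfKV, fun x _ => hVuniv ▸ Set.mem_univ _⟩⟩
  · have hcont : ContinuousOn (fun x => infDist (f x) Vᶜ) K :=
      ((continuous_infDist_pt Vᶜ).comp hf).continuousOn
    obtain ⟨x₀, hx₀K, hmin⟩ := (hI.isCompact K hK).exists_isMinOn hKne hcont
    have hx₀V : f x₀ ∉ Vᶜ := fun hc => hc (hfKV hx₀K)
    have hεpos : 0 < infDist (f x₀) Vᶜ :=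
      (hV.isClosed_compl.notMem_iff_infDist_pos hVc).1 hx₀V
    refine ⟨infDist (f x₀) Vᶜ, hεpos, fun h hh => ⟨hfKV, fun x hx => ?_⟩⟩
    by_contra hxV
    have h1 : infDist (f x) Vᶜ ≤ dist (f x) (h x) := infDist_le_dist_of_mem hxV
    have h2 : infDist (f x₀) Vᶜ ≤ infDist (f x) Vᶜ := isMinOn_iff.1 hmin x hx
    have h3 := hh x hx
    rw [dist_comm] at h3
    exact absurd (lt_of_le_of_lt (h2.trans h1) h3) (lt_irrefl _)

lemma exists_unif {I : Set (Set X)} (hI : IsCompactIdeal X I) (hIe : ∅ ∈ I) {f : X → Y}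
    (hf : Continuous f) (t : Set (Set (X → Y))) (htf : t.Finite)
    (hsub : ∀ s ∈ t, ∃ K ∈ I, ∃ V : Set Y, IsOpen V ∧ s = {h : X → Y | Set.MapsTo h K V})
    (hft : ∀ s ∈ t, f ∈ s) :
    ∃ K ∈ I, ∃ ε : ℝ, 0 < ε ∧
      ∀ h : X → Y, (∀ x ∈ K, dist (h x) (f x) < ε) → ∀ s ∈ t, h ∈ s := by
  refine Set.Finite.induction_on
    (motive := fun t _ => (∀ s ∈ t, ∃ K ∈ I, ∃ V : Set Y, IsOpen V ∧
        s = {h : X → Y | Set.MapsTo h K V}) → (∀ s ∈ t, f ∈ s) →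
      ∃ K ∈ I, ∃ ε : ℝ, 0 < ε ∧
        ∀ h : X → Y, (∀ x ∈ K, dist (h x) (f x) < ε) → ∀ s ∈ t, h ∈ s)
    t htf ?_ ?_ hsub hft
  · exact fun _ _ => ⟨∅, hIe, 1, one_pos, fun h _ s hs => absurd hs (Set.notMem_empty s)⟩
  · rintro a tt ha htt ih hsub hft
    obtain ⟨K₁, hK₁, ε₁, hε₁, h₁⟩ := ih (fun s hs => hsub s (Set.mem_insert_of_mem _ hs))
      (fun s hs => hft s (Set.mem_insert_of_mem _ hs))
    obtain ⟨Ka, hKa, V, hV, rfl⟩ := hsub a (Set.mem_insert _ _)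
    have hfa : Set.MapsTo f Ka V := hft _ (Set.mem_insert _ _)
    obtain ⟨ε₂, hε₂, h₂⟩ := exists_eps hI hf hKa hV hfa
    refine ⟨K₁ ∪ Ka, hI.union_mem _ hK₁ _ hKa, min ε₁ ε₂, lt_min hε₁ hε₂, ?_⟩
    intro h hh s hs
    rcases Set.mem_insert_iff.1 hs with rfl | hs
    · exact (h₂ h (fun x hx =>
        lt_of_lt_of_le (hh x (Set.mem_union_right _ hx)) (min_le_right _ _))).2
    · exact h₁ h (fun x hx =>
        lt_of_lt_of_le (hh x (Set.mem_union_left _ hx)) (min_le_left _ _)) s hs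

end Helpers
theorem aux_tight {X Y : Type u} [TopologicalSpace X] [MetricSpace Y] [Nontrivial Y]
    (I : Set (Set X)) (hI : IsCompactIdeal X I)
    (H : Set (IdealFn X Y I))
    (hHC : ∀ f ∈ H, Continuous (f : X → Y))
    (hrel : RelTychonoffSub I (Set.univ : Set Y) H {f : X → Y | Continuous f}) :
    tightnessCard ↥H = idealLindelofDeg X I := by
  classical
  obtain ⟨y₁, y₀, hy01⟩ := exists_pair_ne Y
  set sub : Set (Set (IdealFn X Y I)) :=
    {S : Set (X → Y) | ∃ K ∈ I, ∃ U : Set Y, IsOpen U ∧ S = {f : X → Y | Set.MapsTo f K U}}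
    with hsubdef
  have hbasis : TopologicalSpace.IsTopologicalBasis
      ((fun g : Set (Set (IdealFn X Y I)) => ⋂₀ g) ''
        {g : Set (Set (IdealFn X Y I)) | g.Finite ∧ g ⊆ sub}) :=
    TopologicalSpace.isTopologicalBasis_of_subbasis rfl
  set TS : Set Cardinal.{u} := {κ : Cardinal.{u} | Cardinal.aleph0 ≤ κ ∧
    ∀ (A : Set ↥H) (z : ↥H), z ∈ closure A →
      ∃ B : Set ↥H, B ⊆ A ∧ Cardinal.mk B ≤ κ ∧ z ∈ closure B} with hTS
  set LS : Set Cardinal.{u} := {κ : Cardinal.{u} | Cardinal.aleph0 ≤ κ ∧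
    ∀ γ : Set (Set X), (∀ U ∈ γ, IsOpen U) → IsIdealCover I γ →
      ∃ γ' : Set (Set X), γ' ⊆ γ ∧ Cardinal.mk γ' ≤ κ ∧ IsIdealCover I γ'} with hLS
  have hT : tightnessCard ↥H = sInf TS := rfl
  have hL : idealLindelofDeg X I = sInf LS := rfl
  have hTSne : TS.Nonempty := ⟨max Cardinal.aleph0 (Cardinal.mk ↥H), le_max_left _ _,
    fun A z hz => ⟨A, subset_rfl, (Cardinal.mk_set_le A).trans (le_max_right _ _), hz⟩⟩
  have hLSne : LS.Nonempty := ⟨max Cardinal.aleph0 (Cardinal.mk (Set X)), le_max_left _ _,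
    fun γ _ hγc => ⟨γ, subset_rfl, (Cardinal.mk_set_le γ).trans (le_max_right _ _), hγc⟩⟩
  have hTmem : sInf TS ∈ TS := csInf_mem hTSne
  have hLmem : sInf LS ∈ LS := csInf_mem hLSne
  have dirB : ∀ κ ∈ LS, κ ∈ TS := by
    rintro κ ⟨hκ0, hκ⟩
    refine ⟨hκ0, fun A z hz => ?_⟩
    have hAne : A.Nonempty := by
      rcases A.eq_empty_or_nonempty with rfl | h
      · simp at hz
      · exact h
    obtain ⟨a, haA⟩ := hAne
    have hzc : (z : IdealFn X Y I) ∈ closure (Subtype.val '' A) := closure_subtype.1 hz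
    set f : X → Y := (z : IdealFn X Y I) with hfdef
    have hfc : Continuous f := hHC _ z.2
    set γn : ℕ → Set (Set X) := fun n => {U | IsOpen U ∧ ∃ g ∈ A,
      ∀ x ∈ U, dist ((g : IdealFn X Y I) x) (f x) < 1 / (n + 1 : ℝ)} with hγn
    have hcov : ∀ n, IsIdealCover I (γn n) := by
      intro n K hK
      set ε : ℝ := 1 / (n + 1 : ℝ) with hε
      have hεpos : 0 < ε := by positivity
      have hKc : IsCompact K := hI.isCompact K hK
      obtain ⟨tf, htf⟩ := hKc.elim_finite_subcover (fun j : X => f ⁻¹' Metric.ball (f j) (ε/4))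
        (fun j => (Metric.isOpen_ball).preimage hfc)
        (fun x hx => Set.mem_iUnion.2 ⟨x, by simp [Metric.mem_ball, hεpos]⟩)
      set Kj : X → Set X := fun j => K ∩ f ⁻¹' Metric.closedBall (f j) (ε/4) with hKjdef
      have hKjI : ∀ j, Kj j ∈ I := by
        intro j
        have hc : IsCompact (K ∩ f ⁻¹' Metric.closedBall (f j) (ε/4)) :=
          hKc.inter_right (Metric.isClosed_closedBall.preimage hfc)
        have h2 := hI.inter_compact_mem K hK _ hc
        rwa [← Set.inter_assoc, Set.inter_self] at h2
      set O : Set (IdealFn X Y I) :=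
        ⋂ j ∈ tf, {h : X → Y | Set.MapsTo h (Kj j) (Metric.ball (f j) (ε/2))} with hOdef
      have hOopen : IsOpen O := isOpen_biInter_finset fun j _ =>
        hbasis.isOpen ⟨{{h : X → Y | Set.MapsTo h (Kj j) (Metric.ball (f j) (ε/2))}},
          ⟨Set.finite_singleton _, Set.singleton_subset_iff.2
            ⟨Kj j, hKjI j, _, Metric.isOpen_ball, rfl⟩⟩, Set.sInter_singleton _⟩
      have hzO : (z : IdealFn X Y I) ∈ O := by
        refine Set.mem_iInter₂.2 fun j _ x hx => ?_
        have h1 : dist (f x) (f j) ≤ ε/4 := hx.2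
        have : dist (f x) (f j) < ε/2 := lt_of_le_of_lt h1 (by linarith)
        exact this
      obtain ⟨g', hg'⟩ := mem_closure_iff.1 hzc O hOopen hzO
      obtain ⟨g, hgA, rfl⟩ := hg'.2
      have hg'O := hg'.1
      have hgK : ∀ x ∈ K, dist ((g : IdealFn X Y I) x) (f x) < ε := by
        intro x hx
        obtain ⟨j, hj, hjm⟩ := Set.mem_iUnion₂.1 (htf hx)
        have hxKj : x ∈ Kj j := ⟨hx, Metric.ball_subset_closedBall hjm⟩
        have h1 : (g : IdealFn X Y I) x ∈ Metric.ball (f j) (ε/2) :=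
          Set.mem_iInter₂.1 hg'O j hj hxKj
        have h2 : dist ((g : IdealFn X Y I) x) (f j) < ε/2 := h1
        have h3 : dist (f x) (f j) < ε/4 := hjm
        have h4 := dist_triangle ((g : IdealFn X Y I) x) (f j) (f x)
        rw [dist_comm (f j) (f x)] at h4
        linarith
      exact ⟨{x | dist ((g : IdealFn X Y I) x) (f x) < ε},
        ⟨isOpen_lt (Continuous.dist (hHC _ g.2) hfc) continuous_const, g, hgA,
          fun x hx => hx⟩, fun x hx => hgK x hx⟩
    have hchoice : ∀ n, ∃ γ' : Set (Set X), γ' ⊆ γn n ∧ Cardinal.mk γ' ≤ κ ∧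
        IsIdealCover I γ' := fun n => hκ (γn n) (fun U hU => hU.1) (hcov n)
    choose γ' hγ'sub hγ'card hγ'cov using hchoice
    set c : ℕ → Set X → ↥H := fun n U =>
      if h : ∃ g ∈ A, ∀ x ∈ U, dist ((g : IdealFn X Y I) x) (f x) < 1 / (n + 1 : ℝ)
      then h.choose else a with hcdef
    have hcmem : ∀ n U, U ∈ γ' n → c n U ∈ A ∧
        ∀ x ∈ U, dist ((c n U : IdealFn X Y I) x) (f x) < 1 / (n + 1 : ℝ) := by
      intro n U hU
      have hex := (hγ'sub n hU).2
      rw [hcdef]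
      simp only [dif_pos hex]
      exact ⟨hex.choose_spec.1, hex.choose_spec.2⟩
    set B : Set ↥H := insert a (⋃ i : ULift.{u} ℕ, c i.down '' γ' i.down) with hBdef
    have hBA : B ⊆ A := by
      rintro b hb
      rcases Set.mem_insert_iff.1 hb with rfl | hb
      · exact haA
      · obtain ⟨i, hi⟩ := Set.mem_iUnion.1 hb
        obtain ⟨U, hU, rfl⟩ := hi
        exact (hcmem _ _ hU).1
    have hBcard : Cardinal.mk B ≤ κ := by
      have h1 : Cardinal.mk (⋃ i : ULift.{u} ℕ, c i.down '' γ' i.down) ≤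
          Cardinal.mk (ULift.{u} ℕ) * ⨆ i : ULift.{u} ℕ, Cardinal.mk (c i.down '' γ' i.down) :=
        Cardinal.mk_iUnion_le _
      have h2 : (⨆ i : ULift.{u} ℕ, Cardinal.mk (c i.down '' γ' i.down)) ≤ κ :=
        ciSup_le' fun i => (Cardinal.mk_image_le).trans (hγ'card i.down)
      have h3 : Cardinal.mk (ULift.{u} ℕ) = Cardinal.aleph0 := by simp
      have h4 : Cardinal.aleph0 * κ = κ := by
        rw [Cardinal.mul_eq_max le_rfl hκ0]
        exact max_eq_right hκ0
      calc Cardinal.mk B ≤ Cardinal.mk (⋃ i : ULift.{u} ℕ, c i.down '' γ' i.down) + 1 :=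
            Cardinal.mk_insert_le
        _ ≤ Cardinal.aleph0 * κ + 1 := by
            refine add_le_add ?_ le_rfl
            rw [← h3]
            exact h1.trans (mul_le_mul_right h2 _)
        _ = κ + 1 := by rw [h4]
        _ ≤ κ + κ := add_le_add le_rfl (le_trans Cardinal.one_le_aleph0 hκ0)
        _ = κ := Cardinal.add_eq_self hκ0
    refine ⟨B, hBA, hBcard, ?_⟩
    rw [closure_subtype, hbasis.mem_closure_iff]
    rintro o ⟨tt, ⟨httf, httsub⟩, rfl⟩ hzo
    by_cases htte : tt = ∅
    · subst htte
      exact ⟨a, by simp, Set.mem_image_of_mem _ (Set.mem_insert _ _)⟩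
    · have hIe : ∅ ∈ I := by
        obtain ⟨s, hs⟩ := Set.nonempty_iff_ne_empty.2 htte
        obtain ⟨K₀, hK₀, -⟩ := httsub hs
        exact hI.empty_mem ⟨K₀, hK₀⟩
      have hzt : ∀ s ∈ tt, (f : X → Y) ∈ s := fun s hs => Set.mem_sInter.1 hzo s hs
      obtain ⟨K, hK, ε, hεpos, himp⟩ :=
        exists_unif hI hIe hfc tt httf (fun s hs => httsub hs) hzt
      obtain ⟨n, hn⟩ := exists_nat_one_div_lt hεpos
      obtain ⟨U, hU, hKU⟩ := hγ'cov n K hK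
      obtain ⟨hgA', hgU⟩ := hcmem n U hU
      refine ⟨(c n U : IdealFn X Y I),
        Set.mem_sInter.2 (himp _ fun x hx => lt_trans (hgU x (hKU hx)) hn),
        Set.mem_image_of_mem _ ?_⟩
      exact Set.mem_insert_iff.2 (Or.inr (Set.mem_iUnion.2 ⟨⟨n⟩, Set.mem_image_of_mem _ hU⟩))
  have dirA : sInf TS ∈ LS := by
    refine ⟨hTmem.1, ?_⟩
    intro γ hγo hγc
    rcases I.eq_empty_or_nonempty with hIemp | hIne
    · refine ⟨∅, Set.empty_subset _, ?_, fun A hA => absurd (hIemp ▸ hA) (Set.notMem_empty A)⟩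
      simpa using Cardinal.zero_le _
    have hIe : ∅ ∈ I := hI.empty_mem hIne
    obtain ⟨zf, hzH, -, hzA1⟩ := hrel Set.univ isClosed_univ ∅ hIe (by simp) y₁
      (Set.mem_univ _) (fun _ => y₁) continuous_const (by simp) (by simp)
    have hzconst : ∀ x, zf x = y₁ := fun x => hzA1 ⟨x, Set.mem_univ x, rfl⟩
    set z : ↥H := ⟨zf, hzH⟩ with hzdef
    set AA : Set ↥H := {h | ∃ U ∈ γ, (h : IdealFn X Y I) '' Uᶜ ⊆ {y₀}} with hAAdef
    have hmk : ∀ K ∈ I, ∀ U ∈ γ, K ⊆ U →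
        ∃ h ∈ H, (∀ x ∈ K, h x = y₁) ∧ h '' Uᶜ ⊆ {y₀} := by
      intro K hK U hU hKU
      obtain ⟨h, hhH, hEq, hhA⟩ := hrel Uᶜ (hγo U hU).isClosed_compl K hK
        (by simpa using hKU) y₀ (Set.mem_univ _) (fun _ => y₁) continuous_const
        ((Set.finite_singleton y₁).subset (by simp [Set.image_subset_iff]))
        (Set.subset_univ _)
      exact ⟨h, hhH, fun x hx => hEq hx, hhA⟩
    have hzAA : z ∈ closure AA := by
      rw [closure_subtype, hbasis.mem_closure_iff]
      rintro o ⟨tt, ⟨httf, httsub⟩, rfl⟩ hzo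
      have hzt : ∀ s ∈ tt, zf ∈ s := fun s hs => Set.mem_sInter.1 hzo s hs
      obtain ⟨K, hK, ε, hεpos, himp⟩ :=
        exists_unif hI hIe (hHC _ hzH) tt httf (fun s hs => httsub hs) hzt
      obtain ⟨U, hU, hKU⟩ := hγc K hK
      obtain ⟨h, hhH, hhK, hhU⟩ := hmk K hK U hU hKU
      refine ⟨h, Set.mem_sInter.2 (himp h fun x hx => ?_), ⟨⟨h, hhH⟩, ⟨U, hU, hhU⟩, rfl⟩⟩
      rw [hhK x hx, hzconst x]
      simpa using hεpos
    obtain ⟨B, hBsub, hBcard, hzB⟩ := hTmem.2 AA z hzAA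
    set Uo : ↥H → Set X := fun b =>
      if h : ∃ U ∈ γ, (b : IdealFn X Y I) '' Uᶜ ⊆ {y₀} then h.choose else Set.univ
      with hUodef
    have hUo : ∀ b ∈ B, Uo b ∈ γ ∧ (b : IdealFn X Y I) '' (Uo b)ᶜ ⊆ {y₀} := by
      intro b hb
      have hex : ∃ U ∈ γ, (b : IdealFn X Y I) '' Uᶜ ⊆ {y₀} := hBsub hb
      rw [hUodef]
      simp only [dif_pos hex]
      exact ⟨hex.choose_spec.1, hex.choose_spec.2⟩
    refine ⟨Uo '' B, ?_, (Cardinal.mk_image_le).trans hBcard, ?_⟩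
    · rintro _ ⟨b, hb, rfl⟩
      exact (hUo b hb).1
    · intro K hK
      set W : Set (IdealFn X Y I) :=
        {h : X → Y | Set.MapsTo h K (Metric.ball y₁ (dist y₀ y₁))} with hWdef
      have hWopen : IsOpen W := hbasis.isOpen ⟨{W}, ⟨Set.finite_singleton _,
        Set.singleton_subset_iff.2 ⟨K, hK, _, Metric.isOpen_ball, rfl⟩⟩,
        Set.sInter_singleton _⟩
      have hdpos : 0 < dist y₀ y₁ := dist_pos.2 (Ne.symm hy01)
      have hzW : (z : IdealFn X Y I) ∈ W := fun x _ => by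
        show zf x ∈ Metric.ball y₁ (dist y₀ y₁)
        simp [hzconst x, Metric.mem_ball, hdpos]
      obtain ⟨b', hb'⟩ := mem_closure_iff.1 (closure_subtype.1 hzB) W hWopen hzW
      obtain ⟨b, hbB, rfl⟩ := hb'.2
      have hbW := hb'.1
      refine ⟨Uo b, Set.mem_image_of_mem _ hbB, fun x hx => ?_⟩
      by_contra hxU
      have h1 : (b : IdealFn X Y I) x = y₀ := (hUo b hbB).2 ⟨x, hxU, rfl⟩
      have h2 := hbW hx
      rw [Metric.mem_ball, h1] at h2
      exact absurd h2 (lt_irrefl _)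
  rw [hT, hL]
  exact le_antisymm (csInf_le (OrderBot.bddBelow TS) (dirB _ hLmem))
    (csInf_le (OrderBot.bddBelow LS) dirA)
/-- Let `Y` be a metric space with at least two points and `X` a
`Y_I`-Tychonoff space. If `H` is a relatively `Y_I`-Tychonoff subspace of `C_I(X,Y)`,
then `t(H) = I-Lin(X)`; in particular `t(C_I(X,Y)) = I-Lin(X)`. -/
theorem tightness_eq_idealLindelofDeg {X Y : Type u}
    [TopologicalSpace X] [MetricSpace Y] [Nontrivial Y]
    (I : Set (Set X)) (hI : IsCompactIdeal X I)
    (hXT : IdealYTychonoff X Y I)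
    (H : Set (IdealFn X Y I))
    (hHC : ∀ f ∈ H, Continuous (f : X → Y))
    (hrel : RelTychonoffSub I (Set.univ : Set Y) H {f : X → Y | Continuous f}) :
    tightnessCard ↥H = idealLindelofDeg X I ∧
    tightnessCard ↥{f : IdealFn X Y I | Continuous (f : X → Y)} = idealLindelofDeg X I := by
  constructor
  · exact aux_tight I hI H hHC hrel
  · refine aux_tight I hI {f : IdealFn X Y I | Continuous (f : X → Y)} (fun f hf => hf) ?_
    intro A hA F hF hFA y₀ _ f hf hfin _
    obtain ⟨g, hgc, hgf, hgA⟩ := hXT A hA y₀ F hF hFA (F.restrict f)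
      ((show Continuous f from hf).comp continuous_subtype_val)
      (hfin.subset (by rintro _ ⟨x, rfl⟩; exact ⟨x.1, x.2, rfl⟩))
    exact ⟨g, hgc, fun x hx => hgf ⟨x, hx⟩, hgA⟩
end

section
/- Let Y be a Tychonoff space that is not pseudocompact, let X be a Y-Tychonoff space containing a discrete family {U_i}_{i∈ω₁} of nonempty open subsets indexed by the first uncountable ordinal, and let 𝓘 be an ideal of compact sets in X. Then every subspace H of Y^X, equipped with the 𝓘-open topology, that contains C(X,Y) is not a normal space. -/
open Set Filter Topology TopologicalSpace

universe u v

/-- If `Y` is Tychonoff and not pseudocompact, `X` is `Y`-Tychonoff and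
contains a discrete family of nonempty open sets indexed by a set of cardinality `ℵ₁`,
and `I` is an ideal of compact sets in `X`, then no subspace `H` of `(Y^X, τ_I)`
containing `C(X,Y)` is normal. -/
theorem not_normal_of_discrete_family {X : Type u} {Y : Type v} {ι : Type w}
    [TopologicalSpace X] [TopologicalSpace Y] [T1Space Y] [CompletelyRegularSpace Y]
    (hYpc : ∃ f : Y → ℝ, Continuous f ∧ ¬ Bornology.IsBounded (Set.range f))
    (hXT : YTychonoff X Y)
    (hι : Cardinal.mk ι = Cardinal.aleph 1)
    (U : ι → Set X) (hUo : ∀ i, IsOpen (U i)) (hUne : ∀ i, (U i).Nonempty)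
    (hUd : ∀ x : X, ∃ V : Set X, IsOpen V ∧ x ∈ V ∧
      {i : ι | (V ∩ U i).Nonempty}.Subsingleton)
    (I : Set (Set X)) (hI : IsCompactIdeal X I)
    (H : Set (IdealFn X Y I))
    (hH : {f : IdealFn X Y I | Continuous (f : X → Y)} ⊆ H) :
    ¬ (T1Space ↥H ∧ NormalSpace ↥H) := by
    classical
  rintro ⟨-, hN⟩
  -- basic nonemptiness
  have hιne : Nonempty ι := by
    rw [← Cardinal.mk_ne_zero_iff, hι]
    exact ne_of_gt (lt_of_lt_of_le Cardinal.aleph0_pos (Cardinal.aleph0_le_aleph 1))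
  -- uniqueness of the open set containing a point
  have huniq : ∀ (z : X) (i j : ι), z ∈ U i → z ∈ U j → i = j := by
    intro z i j hi hj
    obtain ⟨V, hVo, hzV, hVs⟩ := hUd z
    exact hVs ⟨z, hzV, hi⟩ ⟨z, hzV, hj⟩
  choose x hx using hUne
  -- the separated sequence y in Y
  obtain ⟨f, hf, hub⟩ := hYpc
  have hgrow : ∀ r : ℝ, ∃ z : Y, r < |f z| := by
    intro r
    rw [isBounded_iff_forall_norm_le] at hub
    push_neg at hub
    obtain ⟨v, hv, hrv⟩ := hub r
    obtain ⟨z, rfl⟩ := hv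
    exact ⟨z, by simpa [Real.norm_eq_abs] using hrv⟩
  choose g hg using hgrow
  set y : ℕ → Y := fun n => Nat.rec (g 0) (fun _ p => g (|f p| + 1)) n with hy
  set c : ℕ → ℝ := fun n => |f (y n)| with hcdef
  have hstepc : ∀ n, c n + 1 < c (n + 1) := fun n => hg (c n + 1)
  have hsep0 : ∀ n, ∀ m, m < n → c m + 1 ≤ c n := by
    intro n
    induction n with
    | zero => omega
    | succ k ih =>
      intro m hm
      rcases Nat.lt_succ_iff_lt_or_eq.mp hm with h | rfl
      · have := ih m h
        have := hstepc k
        linarith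
      · exact le_of_lt (hstepc m)
  have hsep : ∀ m n : ℕ, m ≠ n → 1 ≤ |c m - c n| := by
    intro m n hmn
    rcases hmn.lt_or_gt with h | h
    · have := hsep0 n m h
      exact le_abs.mpr (Or.inr (by linarith))
    · have := hsep0 m n h
      exact le_abs.mpr (Or.inl (by linarith))
  have hcinj : Function.Injective c := by
    intro m n h
    by_contra hne
    have := hsep m n hne
    rw [h] at this
    simp at this
    linarith
  have hyinj : Function.Injective y := fun m n h => hcinj (by rw [hcdef]; simp [h])
  -- the separating open sets W n
  set W : ℕ → Set Y := fun n => {z | |f z| ∈ Set.Ioo (c n - 1/2) (c n + 1/2)} with hWdef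
  have hWo : ∀ n, IsOpen (W n) := fun n => isOpen_Ioo.preimage hf.abs
  have hyW : ∀ n, y n ∈ W n := by
    intro n
    constructor <;> [skip; skip] <;> simp [hcdef] <;> norm_num
  have hWy : ∀ m n, y m ∈ W n → m = n := by
    intro m n hm
    by_contra hne
    have h1 := hsep m n hne
    obtain ⟨h2, h3⟩ := hm
    have : |c m - c n| < 1 := abs_lt.mpr ⟨by simp [hcdef] at h2 ⊢; linarith, by simp [hcdef] at h3 ⊢; linarith⟩
    linarith
  have hYcl : IsClosed (Set.range y) := by
    rw [← isOpen_compl_iff, isOpen_iff_mem_nhds]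
    intro z hz
    set V₀ : Set Y := {w | |f w| ∈ Set.Ioo (|f z| - 1/2) (|f z| + 1/2)} with hV₀
    have hV₀o : IsOpen V₀ := isOpen_Ioo.preimage hf.abs
    have hzV₀ : z ∈ V₀ := ⟨by norm_num, by norm_num⟩
    have hone : ∀ k m : ℕ, y k ∈ V₀ → y m ∈ V₀ → k = m := by
      intro k m hk hm
      by_contra hne
      have h1 := hsep k m hne
      obtain ⟨hk1, hk2⟩ := hk
      obtain ⟨hm1, hm2⟩ := hm
      have : |c k - c m| < 1 := abs_lt.mpr ⟨by simp [hcdef] at *; linarith, by simp [hcdef] at *; linarith⟩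
      linarith
    by_cases hm : ∃ m, y m ∈ V₀
    · obtain ⟨m, hym⟩ := hm
      refine Filter.mem_of_superset ((hV₀o.inter isClosed_singleton.isOpen_compl).mem_nhds
        ⟨hzV₀, fun h => hz ⟨m, (Set.mem_singleton_iff.mp h).symm⟩⟩) ?_
      rintro w ⟨hwV, hwm⟩ ⟨k, rfl⟩
      exact hwm (Set.mem_singleton_iff.mpr (congrArg y (hone k m hwV hym)))
    · refine Filter.mem_of_superset (hV₀o.mem_nhds hzV₀) ?_
      rintro w hwV ⟨k, rfl⟩
      exact hm ⟨k, hwV⟩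
  -- bump functions
  have hbump : ∀ (i : ι) (n : ℕ), ∃ b : X → Y, Continuous b ∧ b (x i) = y n ∧
      ∀ z, z ∉ U i → b z = y 0 := by
    intro i n
    obtain ⟨g', hgc, hgF, hgA⟩ := hXT (U i)ᶜ (hUo i).isClosed_compl (y 0) {x i}
      (Set.finite_singleton _)
      (by rw [compl_compl]; exact Set.singleton_subset_iff.mpr (hx i)) (fun _ => y n)
    exact ⟨g', hgc, hgF ⟨x i, rfl⟩, fun z hz => hgA ⟨z, hz, rfl⟩⟩
  choose b hbc hbx hbz using hbump
  -- the embedding e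
  set e : (ι → ℕ) → X → Y :=
    fun s z => if hz : ∃ i, z ∈ U i then b hz.choose (s hz.choose) z else y 0 with hedef
  have heU : ∀ (s : ι → ℕ) (z : X) (i : ι), z ∈ U i → e s z = b i (s i) z := by
    intro s z i hzi
    have hz : ∃ j, z ∈ U j := ⟨i, hzi⟩
    have hchoose : hz.choose = i := huniq z _ _ hz.choose_spec hzi
    simp only [hedef, dif_pos hz, hchoose]
  have heN : ∀ (s : ι → ℕ) (z : X), (∀ i, z ∉ U i) → e s z = y 0 := by
    intro s z h
    simp only [hedef]
    rw [dif_neg (by push_neg; exact h)]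
  have hexv : ∀ (s : ι → ℕ) (i : ι), e s (x i) = y (s i) := fun s i => by
    rw [heU s (x i) i (hx i), hbx]
  have hecont : ∀ s, Continuous (e s) := by
    intro s
    rw [continuous_iff_continuousAt]
    intro p
    obtain ⟨V, hVo, hpV, hVs⟩ := hUd p
    by_cases hiV : ∃ i, (V ∩ U i).Nonempty
    · obtain ⟨i₀, hi₀⟩ := hiV
      have heq : Set.EqOn (b i₀ (s i₀)) (e s) V := by
        intro z hzV
        by_cases hz : ∃ j, z ∈ U j
        · obtain ⟨j, hj⟩ := hz
          have hji : j = i₀ := hVs ⟨z, hzV, hj⟩ hi₀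
          rw [heU s z j hj, hji]
        · push_neg at hz
          rw [heN s z hz, hbz i₀ (s i₀) z (hz i₀)]
      exact ((hbc i₀ (s i₀)).continuousAt).congr
        (Filter.eventuallyEq_of_mem (hVo.mem_nhds hpV) heq)
    · have heq : Set.EqOn (fun _ : X => y 0) (e s) V := by
        intro z hzV
        have hz : ∀ j, z ∉ U j := fun j hj => hiV ⟨j, z, hzV, hj⟩
        rw [heN s z hz]
      exact (continuous_const.continuousAt).congr
        (Filter.eventuallyEq_of_mem (hVo.mem_nhds hpV) heq)
  have heH : ∀ s, e s ∈ H := fun s => hH (hecont s)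
  -- singletons belong to I
  have hsing : ∀ z : X, ({z} : Set X) ∈ I := by
    intro z
    have hz : z ∈ ⋃₀ I := by rw [hI.sUnion_eq]; trivial
    obtain ⟨A, hA, hzA⟩ := hz
    have h2 := hI.inter_compact_mem A hA {z} isCompact_singleton
    rwa [Set.inter_eq_self_of_subset_right (Set.singleton_subset_iff.mpr hzA)] at h2
  have hIne : I.Nonempty := ⟨{x (Classical.arbitrary ι)}, hsing _⟩
  -- basic open sets of the ideal topology
  have hIopen : ∀ K ∈ I, ∀ V : Set Y, IsOpen V →
      IsOpen {h : IdealFn X Y I | Set.MapsTo (h : X → Y) K V} :=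
    fun K hK V hV => TopologicalSpace.isOpen_generateFrom_of_mem ⟨K, hK, V, hV, rfl⟩
  -- evaluation maps are continuous on ↥H
  have hev : ∀ z : X, Continuous (fun h : ↥H => (h.1 : X → Y) z) := by
    intro z
    rw [continuous_def]
    intro V hV
    have h1 : IsOpen {h : IdealFn X Y I | Set.MapsTo (h : X → Y) {z} V} :=
      hIopen {z} (hsing z) V hV
    have h2 : (fun h : ↥H => (h.1 : X → Y) z) ⁻¹' V =
        Subtype.val ⁻¹' {h : IdealFn X Y I | Set.MapsTo (h : X → Y) {z} V} := by
      ext h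
      simp [Set.mapsTo_singleton]
      exact ⟨fun hh _ hw => by rw [Set.mem_singleton_iff.mp hw]; exact hh, fun hh => hh (Set.mem_singleton z)⟩
    rw [h2]
    exact h1.preimage continuous_subtype_val
  -- ambient cylinder lemma
  have hamb : ∀ S : Set (IdealFn X Y I), TopologicalSpace.GenerateOpen
      {S : Set (X → Y) | ∃ K ∈ I, ∃ V : Set Y, IsOpen V ∧ S = {f : X → Y | Set.MapsTo f K V}} S →
      ∀ g₀ ∈ S, ∃ K ∈ I, ∀ g' : X → Y, Set.EqOn g' g₀ K → g' ∈ S := by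
    intro S hS
    induction hS with
    | basic S hS =>
      obtain ⟨K, hK, V, hV, rfl⟩ := hS
      intro g₀ hg₀
      exact ⟨K, hK, fun g' hEq z hz => by rw [hEq hz]; exact hg₀ hz⟩
    | univ =>
      intro g₀ _
      obtain ⟨K, hK⟩ := hIne
      exact ⟨K, hK, fun _ _ => trivial⟩
    | inter S₁ S₂ h₁ h₂ ih₁ ih₂ =>
      intro g₀ hg₀
      obtain ⟨K₁, hK₁, hc₁⟩ := ih₁ g₀ hg₀.1
      obtain ⟨K₂, hK₂, hc₂⟩ := ih₂ g₀ hg₀.2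
      exact ⟨K₁ ∪ K₂, hI.union_mem K₁ hK₁ K₂ hK₂, fun g' hEq =>
        ⟨hc₁ g' (hEq.mono Set.subset_union_left), hc₂ g' (hEq.mono Set.subset_union_right)⟩⟩
    | sUnion 𝒯 h ih =>
      rintro g₀ ⟨S₀, hS₀, hgS₀⟩
      obtain ⟨K, hK, hc⟩ := ih S₀ hS₀ g₀ hgS₀
      exact ⟨K, hK, fun g' hEq => ⟨S₀, hS₀, hc g' hEq⟩⟩
  -- a compact set meets only finitely many U i
  have hIK : ∀ K : Set X, IsCompact K → {i : ι | (K ∩ U i).Nonempty}.Finite := by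
    intro K hK
    choose V hVo hVmem hVs using hUd
    obtain ⟨t, htK, hcov⟩ := hK.elim_nhds_subcover V (fun z _ => (hVo z).mem_nhds (hVmem z))
    have hsub : {i : ι | (K ∩ U i).Nonempty} ⊆ ⋃ z ∈ t, {i | (V z ∩ U i).Nonempty} := by
      rintro i ⟨p, hpK, hpU⟩
      obtain ⟨z, hz, hpV⟩ : ∃ z ∈ t, p ∈ V z := by simpa using hcov hpK
      exact Set.mem_biUnion hz ⟨p, hpV, hpU⟩
    exact (Set.Finite.biUnion t.finite_toSet (fun z _ => (hVs z).finite)).subset hsub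
  -- e transfers agreement on index sets to agreement on K
  have heKey : ∀ (s s' : ι → ℕ) (K : Set X), (∀ i, (K ∩ U i).Nonempty → s i = s' i) →
      Set.EqOn (e s) (e s') K := by
    intro s s' K hss z hzK
    by_cases hz : ∃ j, z ∈ U j
    · obtain ⟨j, hj⟩ := hz
      rw [heU s z j hj, heU s' z j hj, hss j ⟨z, hzK, hj⟩]
    · push_neg at hz
      rw [heN s z hz, heN s' z hz]
  -- cylinder lemma in ↥H
  have hcyl : ∀ G : Set ↥H, IsOpen G → ∀ s : ι → ℕ, (⟨e s, heH s⟩ : ↥H) ∈ G →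
      ∃ T : Finset ι, ∀ s' : ι → ℕ, (∀ i ∈ T, s' i = s i) → (⟨e s', heH s'⟩ : ↥H) ∈ G := by
    intro G hG s hs
    obtain ⟨S, hS, rfl⟩ := isOpen_induced_iff.mp hG
    obtain ⟨K, hK, hcK⟩ := hamb S hS (e s) hs
    have hKfin := hIK K (hI.isCompact K hK)
    refine ⟨hKfin.toFinset, fun s' hs' => ?_⟩
    exact hcK (e s') (heKey s' s K (fun i hi => hs' i (hKfin.mem_toFinset.mpr hi)))
  -- the two closed sets
  set val : ↥H → ι → Y := fun h i => (h.1 : X → Y) (x i) with hvaldef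
  set F : ℕ → Set ↥H := fun k => {h | (∀ i, val h i ∈ Set.range y) ∧
    ∀ n, n ≠ k → ∀ i j, val h i = y n → val h j = y n → i = j} with hFdef
  have hFe : ∀ (k : ℕ) (s : ι → ℕ), (∀ n, n ≠ k → ∀ i j, s i = n → s j = n → i = j) →
      (⟨e s, heH s⟩ : ↥H) ∈ F k := by
    intro k s hsk
    have hval : ∀ i, val (⟨e s, heH s⟩ : ↥H) i = y (s i) := fun i => hexv s i
    constructor
    · intro i
      rw [hval i]
      exact Set.mem_range_self _
    · intro n hn i j hi hj
      rw [hval i] at hi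
      rw [hval j] at hj
      exact hsk n hn i j (hyinj hi) (hyinj hj)
  have hFcl : ∀ k, IsClosed (F k) := by
    intro k
    have hC : IsClosed {h : ↥H | ∀ i, val h i ∈ Set.range y} := by
      have : {h : ↥H | ∀ i, val h i ∈ Set.range y} =
          ⋂ i, (fun h : ↥H => (h.1 : X → Y) (x i)) ⁻¹' Set.range y := by
        ext h
        simp [hvaldef]
      rw [this]
      exact isClosed_iInter (fun i => hYcl.preimage (hev (x i)))
    have hO : IsOpen {h : ↥H | ∃ n, n ≠ k ∧ ∃ i j, i ≠ j ∧ val h i ∈ W n ∧ val h j ∈ W n} := by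
      have : {h : ↥H | ∃ n, n ≠ k ∧ ∃ i j, i ≠ j ∧ val h i ∈ W n ∧ val h j ∈ W n} =
          ⋃ n, ⋃ (_ : n ≠ k), ⋃ i, ⋃ j, ⋃ (_ : i ≠ j),
            ((fun h : ↥H => (h.1 : X → Y) (x i)) ⁻¹' W n ∩
             (fun h : ↥H => (h.1 : X → Y) (x j)) ⁻¹' W n) := by
        ext h
        simp [hvaldef]
        tauto
      rw [this]
      exact isOpen_iUnion fun n => isOpen_iUnion fun _ => isOpen_iUnion fun i =>
        isOpen_iUnion fun j => isOpen_iUnion fun _ =>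
          ((hWo n).preimage (hev (x i))).inter ((hWo n).preimage (hev (x j)))
    have hFeq : F k = {h : ↥H | ∀ i, val h i ∈ Set.range y} ∩
        {h : ↥H | ∃ n, n ≠ k ∧ ∃ i j, i ≠ j ∧ val h i ∈ W n ∧ val h j ∈ W n}ᶜ := by
      ext h
      constructor
      · rintro ⟨h1, h2⟩
        refine ⟨h1, ?_⟩
        rintro ⟨n, hn, i, j, hij, hi, hj⟩
        obtain ⟨m, hm⟩ := h1 i
        obtain ⟨m', hm'⟩ := h1 j
        have hmn : m = n := hWy m n (by rwa [hm])
        have hmn' : m' = n := hWy m' n (by rwa [hm'])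
        exact hij (h2 n hn i j (by rw [← hm, hmn]) (by rw [← hm', hmn']))
      · rintro ⟨h1, h2⟩
        refine ⟨h1, ?_⟩
        intro n hn i j hi hj
        by_contra hij
        exact h2 ⟨n, hn, i, j, hij, by rw [hi]; exact hyW n, by rw [hj]; exact hyW n⟩
    rw [hFeq]
    exact hC.inter hO.isClosed_compl
  have hFdisj : Disjoint (F 0) (F 1) := by
    rw [Set.disjoint_left]
    rintro h ⟨h01, h02⟩ ⟨h11, h12⟩
    choose φ hφ using h01
    have hinj : Function.Injective φ := by
      intro i j hij
      rcases eq_or_ne (φ i) 1 with h1 | h1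
      · exact h02 (φ i) (by omega) i j (hφ i).symm (by rw [← hφ j, hij])
      · exact h12 (φ i) h1 i j (hφ i).symm (by rw [← hφ j, hij])
    have hcount : Countable ι := Function.Injective.countable hinj
    have h3 : Cardinal.mk ι ≤ Cardinal.aleph0 := Cardinal.mk_le_aleph0
    rw [hι] at h3
    exact absurd h3 (not_le.mpr Cardinal.aleph0_lt_aleph_one)
  -- separate them
  obtain ⟨G₀, G₁, hG₀o, hG₁o, hFG₀, hFG₁, hGdisj⟩ :=
    hN.normal (F 0) (F 1) (hFcl 0) (hFcl 1) hFdisj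
  -- the recursion state
  set sfun : Finset ι × (ι → ℕ) → ι → ℕ := fun p i => if i ∈ p.1 then p.2 i else 0 with hsfundef
  set Inv : Finset ι × (ι → ℕ) → Prop :=
    fun p => (∀ i ∈ p.1, 2 ≤ p.2 i) ∧ Set.InjOn p.2 p.1 with hInvdef
  have hsfunF : ∀ p, Inv p → (⟨e (sfun p), heH _⟩ : ↥H) ∈ F 0 := by
    intro p hp
    apply hFe
    intro n hn i j hi hj
    have hiT : i ∈ p.1 := by
      by_contra hc
      rw [hsfundef] at hi
      simp only [if_neg hc] at hi
      exact hn hi.symm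
    have hjT : j ∈ p.1 := by
      by_contra hc
      rw [hsfundef] at hj
      simp only [if_neg hc] at hj
      exact hn hj.symm
    apply hp.2 hiT hjT
    rw [hsfundef] at hi hj
    simp only [if_pos hiT] at hi
    simp only [if_pos hjT] at hj
    rw [hi, hj]
  -- one recursion step
  have hstep : ∀ p, Inv p → ∃ q, Inv q ∧ p.1 ⊆ q.1 ∧ (∀ i ∈ p.1, q.2 i = p.2 i) ∧
      ∀ s' : ι → ℕ, (∀ i ∈ q.1, s' i = sfun p i) → (⟨e s', heH s'⟩ : ↥H) ∈ G₀ := by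
    intro p hp
    obtain ⟨T', hT'⟩ := hcyl G₀ hG₀o (sfun p) (hFG₀ (hsfunF p hp))
    set d : Finset ι := T' \ p.1 with hd
    set N : ℕ := 2 + (p.1.image p.2).sup id with hNdef
    have hN2 : 2 ≤ N := Nat.le_add_right 2 _
    have hNgt : ∀ i ∈ p.1, p.2 i < N := by
      intro i hi
      have : p.2 i ≤ (p.1.image p.2).sup id := Finset.le_sup (f := id) (Finset.mem_image_of_mem p.2 hi)
      omega
    set ρ' : ι → ℕ := fun i => if hi : i ∈ d then N + (d.equivFin ⟨i, hi⟩ : ℕ) else p.2 i with hρ'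
    have hρ'T : ∀ i ∈ p.1, ρ' i = p.2 i := by
      intro i hi
      rw [hρ']
      exact dif_neg (by simp [hd, hi])
    have hmemd : ∀ i ∈ p.1 ∪ T', i ∉ d → i ∈ p.1 := by
      intro i hi hid
      rcases Finset.mem_union.mp hi with h | h
      · exact h
      · by_contra hc
        exact hid (Finset.mem_sdiff.mpr ⟨h, hc⟩)
    have hvd : ∀ (i : ι) (hid : i ∈ d), ρ' i = N + (d.equivFin ⟨i, hid⟩ : ℕ) := by
      intro i hid
      rw [hρ']
      exact dif_pos hid
    refine ⟨(p.1 ∪ T', ρ'), ⟨?_, ?_⟩, Finset.subset_union_left, hρ'T, ?_⟩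
    · intro i hi
      have hi' : i ∈ p.1 ∪ T' := hi
      show 2 ≤ ρ' i
      by_cases hid : i ∈ d
      · rw [hvd i hid]
        omega
      · rw [hρ'T i (hmemd i hi' hid)]
        exact hp.1 i (hmemd i hi' hid)
    · intro i hi j hj hij
      have hi' : i ∈ p.1 ∪ T' := by simpa using hi
      have hj' : j ∈ p.1 ∪ T' := by simpa using hj
      have hij' : ρ' i = ρ' j := hij
      by_cases hid : i ∈ d <;> by_cases hjd : j ∈ d
      · rw [hvd i hid, hvd j hjd] at hij'
        have h4 : (d.equivFin ⟨i, hid⟩ : ℕ) = (d.equivFin ⟨j, hjd⟩ : ℕ) := by omega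
        have h5 : d.equivFin ⟨i, hid⟩ = d.equivFin ⟨j, hjd⟩ := Fin.val_injective h4
        have h6 := d.equivFin.injective h5
        exact congrArg Subtype.val h6
      · exfalso
        have hjp : j ∈ p.1 := hmemd j hj' hjd
        rw [hvd i hid, hρ'T j hjp] at hij'
        have := hNgt j hjp
        omega
      · exfalso
        have hip : i ∈ p.1 := hmemd i hi' hid
        rw [hvd j hjd, hρ'T i hip] at hij'
        have := hNgt i hip
        omega
      · have hip : i ∈ p.1 := hmemd i hi' hid
        have hjp : j ∈ p.1 := hmemd j hj' hjd
        rw [hρ'T i hip, hρ'T j hjp] at hij'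
        exact hp.2 hip hjp hij'
    · intro s' hs'
      apply hT'
      intro i hiT'
      exact hs' i (Finset.mem_union_right _ hiT')
  -- run the recursion
  set step : {p : Finset ι × (ι → ℕ) // Inv p} → {p : Finset ι × (ι → ℕ) // Inv p} :=
    fun p => ⟨(hstep p.1 p.2).choose, (hstep p.1 p.2).choose_spec.1⟩ with hstepdef
  set St : ℕ → {p : Finset ι × (ι → ℕ) // Inv p} :=
    fun m => Nat.rec ⟨(∅, fun _ => 2), by constructor <;> simp [hInvdef]⟩ (fun _ q => step q) m
    with hStdef
  set Tm : ℕ → Finset ι := fun m => (St m).1.1 with hTmdef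
  set ρm : ℕ → ι → ℕ := fun m => (St m).1.2 with hρmdef
  have hrel : ∀ m, Tm m ⊆ Tm (m + 1) ∧ (∀ i ∈ Tm m, ρm (m + 1) i = ρm m i) ∧
      ∀ s' : ι → ℕ, (∀ i ∈ Tm (m + 1), s' i = sfun (St m).1 i) → (⟨e s', heH s'⟩ : ↥H) ∈ G₀ :=
    fun m => (hstep (St m).1 (St m).2).choose_spec.2
  have hTmono : ∀ m m', m ≤ m' → Tm m ⊆ Tm m' := by
    intro m m' h
    induction m', h using Nat.le_induction with
    | base => exact subset_rfl
    | succ n hn ih => exact ih.trans (hrel n).1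
  have hcoh : ∀ m m', m ≤ m' → ∀ i ∈ Tm m, ρm m' i = ρm m i := by
    intro m m' h
    induction m', h using Nat.le_induction with
    | base => intro i _; rfl
    | succ n hn ih =>
      intro i hi
      rw [(hrel n).2.1 i (hTmono m n hn hi), ih i hi]
  -- the limit point w
  set w : ι → ℕ := fun i => if h : ∃ m, i ∈ Tm m then ρm h.choose i else 1 with hwdef
  have hwT : ∀ m, ∀ i ∈ Tm m, w i = ρm m i := by
    intro m i hi
    have hex' : ∃ m', i ∈ Tm m' := ⟨m, hi⟩
    have h1 : w i = ρm hex'.choose i := dif_pos hex'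
    rcases le_total hex'.choose m with h | h
    · rw [h1, ← hcoh hex'.choose m h i hex'.choose_spec]
    · rw [h1, hcoh m hex'.choose h i hi]
  have hwN : ∀ i, (∀ m, i ∉ Tm m) → w i = 1 := by
    intro i h
    exact dif_neg (by push_neg; exact h)
  have hρ2 : ∀ m, ∀ i ∈ Tm m, 2 ≤ ρm m i := fun m => (St m).2.1
  have hwmem : ∀ (i : ι) (n : ℕ), w i = n → n ≠ 1 → ∃ m, i ∈ Tm m := by
    intro i n hw hn
    by_contra hc
    push_neg at hc
    rw [hwN i hc] at hw
    exact hn hw.symm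
  have hwF : (⟨e w, heH w⟩ : ↥H) ∈ F 1 := by
    apply hFe
    intro n hn i j hi hj
    obtain ⟨m, him⟩ := hwmem i n hi hn
    obtain ⟨m', hjm⟩ := hwmem j n hj hn
    have hiM : i ∈ Tm (max m m') := hTmono m (max m m') (le_max_left _ _) him
    have hjM : j ∈ Tm (max m m') := hTmono m' (max m m') (le_max_right _ _) hjm
    have heq2 : ρm (max m m') i = ρm (max m m') j := by
      rw [← hwT (max m m') i hiM, ← hwT (max m m') j hjM, hi, hj]
    exact (St (max m m')).2.2 hiM hjM heq2
  -- final contradiction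
  obtain ⟨Tstar, hTstar⟩ := hcyl G₁ hG₁o w (hFG₁ hwF)
  set M : ℕ := Tstar.sup (fun i => if h : ∃ m, i ∈ Tm m then h.choose else 0) with hMdef
  have hM : ∀ i ∈ Tstar, ∀ m, i ∈ Tm m → i ∈ Tm M := by
    intro i hi m him
    have hex' : ∃ m', i ∈ Tm m' := ⟨m, him⟩
    have hle : hex'.choose ≤ M := by
      have h5 := Finset.le_sup (f := fun i => if h : ∃ m, i ∈ Tm m then h.choose else 0) hi
      have h6 : (if h : ∃ m, i ∈ Tm m then h.choose else 0) = hex'.choose := dif_pos hex'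
      exact le_of_eq_of_le h6.symm h5
    exact hTmono _ _ hle hex'.choose_spec
  set u : ι → ℕ := fun i => if i ∈ Tm (M + 1) then sfun (St M).1 i else w i with hudef
  have hu₀ : (⟨e u, heH u⟩ : ↥H) ∈ G₀ := (hrel M).2.2 u (fun i hi => if_pos hi)
  have hu₁ : (⟨e u, heH u⟩ : ↥H) ∈ G₁ := by
    apply hTstar
    intro i hi
    by_cases hiT : i ∈ Tm (M + 1)
    · have hiM : i ∈ Tm M := hM i hi (M + 1) hiT
      have h7 : u i = sfun (St M).1 i := if_pos hiT
      have h8 : sfun (St M).1 i = ρm M i := if_pos hiM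
      rw [h7, h8, ← hwT M i hiM]
    · exact if_neg hiT
  exact Set.disjoint_left.mp hGdisj hu₀ hu₁
end

section
/- Let Z be a Tychonoff P-space. If the pseudocharacter of Z is uncountable, i.e., there is a point z ∈ Z such that no countable family of open sets has intersection equal to {z}, then the cellularity of Z is uncountable, i.e., there exists an uncountable pairwise disjoint family of nonempty open subsets of Z. -/
open Set Filter Topology TopologicalSpace

universe u v

lemma aux_step_pshape {Z : Type u} [TopologicalSpace Z] [T1Space Z] [CompletelyRegularSpace Z]
    (hP : ∀ S : Set (Set Z), S.Countable → (∀ U ∈ S, IsOpen U) → IsOpen (⋂₀ S))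
    (z : Z)
    (hz : ∀ S : Set (Set Z), S.Countable → (∀ U ∈ S, IsOpen U) → ⋂₀ S ≠ {z}) :
    ∀ S : Set (Set Z), S.Countable → (∀ U ∈ S, IsOpen U ∧ z ∈ U) →
      ∃ p : Set Z × Set Z, IsOpen p.1 ∧ z ∈ p.1 ∧ IsOpen p.2 ∧ p.2.Nonempty ∧
        p.2 ⊆ ⋂₀ S ∧ Disjoint p.2 p.1 := by
  intro S hSc hS
  have hG : IsOpen (⋂₀ S) := hP S hSc fun U hU => (hS U hU).1
  have hzG : z ∈ ⋂₀ S := fun U hU => (hS U hU).2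
  have hne : ⋂₀ S ≠ {z} := hz S hSc fun U hU => (hS U hU).1
  have hy : ∃ y ∈ ⋂₀ S, y ≠ z := by
    by_contra h
    push_neg at h
    exact hne (Subset.antisymm (fun x hx => h x hx) (by simpa using hzG))
  obtain ⟨y, hyG, hyz⟩ := hy
  obtain ⟨f, hf, hfz, hfy⟩ := CompletelyRegularSpace.completely_regular z {y}
    isClosed_singleton (by simpa using (hyz.symm : z ≠ y))
  set g : Z → ℝ := fun x => (f x : ℝ) with hgdef
  have hg : Continuous g := continuous_subtype_val.comp hf
  have hgz : g z = 0 := by simp [hgdef, hfz]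
  have hgy : g y = 1 := by simp [hgdef, hfy rfl]
  refine ⟨(g ⁻¹' Iio (1/2), ⋂₀ S ∩ g ⁻¹' Ioi (1/2)), ?_, ?_, ?_, ?_, ?_, ?_⟩
  · exact isOpen_Iio.preimage hg
  · simp only [mem_preimage, mem_Iio, hgz]; norm_num
  · exact hG.inter (isOpen_Ioi.preimage hg)
  · exact ⟨y, hyG, by simp only [mem_preimage, mem_Ioi, hgy]; norm_num⟩
  · exact inter_subset_left
  · rw [Set.disjoint_left]
    rintro x ⟨-, hx2⟩ hx1
    simp only [mem_preimage, mem_Ioi, mem_Iio] at hx1 hx2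
    exact absurd (lt_trans hx2 hx1) (lt_irrefl _)

/-- A Tychonoff P-space with uncountable pseudocharacter has
uncountable cellularity. -/
theorem uncountable_cellularity_of_P_space {Z : Type u} [TopologicalSpace Z]
    [T1Space Z] [CompletelyRegularSpace Z]
    (hP : ∀ S : Set (Set Z), S.Countable → (∀ U ∈ S, IsOpen U) → IsOpen (⋂₀ S))
    (hpsi : ∃ z : Z, ∀ S : Set (Set Z), S.Countable → (∀ U ∈ S, IsOpen U) →
      ⋂₀ S ≠ {z}) :
    ∃ 𝒰 : Set (Set Z), (∀ U ∈ 𝒰, IsOpen U ∧ U.Nonempty) ∧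
      𝒰.PairwiseDisjoint id ∧ ¬ 𝒰.Countable := by
    classical
  obtain ⟨z, hz⟩ := hpsi
  have key := aux_step_pshape hP z hz
  let F : Set (Set Z) → Set Z × Set Z := fun S =>
    if h : S.Countable ∧ ∀ U ∈ S, IsOpen U ∧ z ∈ U then (key S h.1 h.2).choose
    else (Set.univ, Set.univ)
  have hF : ∀ S, S.Countable → (∀ U ∈ S, IsOpen U ∧ z ∈ U) →
      IsOpen (F S).1 ∧ z ∈ (F S).1 ∧ IsOpen (F S).2 ∧ (F S).2.Nonempty ∧
        (F S).2 ⊆ ⋂₀ S ∧ Disjoint (F S).2 (F S).1 := by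
    intro S h1 h2
    simp only [F, dif_pos (⟨h1, h2⟩ : _ ∧ _)]
    exact (key S h1 h2).choose_spec
  let g : Ordinal.{u} → Set Z × Set Z :=
    Ordinal.lt_wf.fix (C := fun _ => Set Z × Set Z)
      (fun α ih => F {s | ∃ β, ∃ h : β < α, s = (ih β h).1})
  have hgeq : ∀ α, g α = F ((fun β => (g β).1) '' Set.Iio α) := by
    intro α
    show Ordinal.lt_wf.fix _ α = _
    rw [WellFounded.fix_eq]
    congr 1
    ext s
    simp only [Set.mem_image, Set.mem_Iio, Set.mem_setOf_eq]
    constructor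
    · rintro ⟨β, h, rfl⟩; exact ⟨β, h, rfl⟩
    · rintro ⟨β, h, rfl⟩; exact ⟨β, h, rfl⟩
  have hIio : ∀ α : Ordinal.{u}, α < (Cardinal.aleph 1).ord → (Set.Iio α).Countable := by
    intro α hα
    rw [← Cardinal.le_aleph0_iff_set_countable, Ordinal.mk_Iio_ordinal]
    have h1 : α.card < Cardinal.aleph 1 := Cardinal.lt_ord.mp hα
    have h2 : α.card ≤ Cardinal.aleph0 := by
      rwa [← Cardinal.succ_aleph0, Order.lt_succ_iff] at h1
    calc Cardinal.lift.{u+1} α.card ≤ Cardinal.lift.{u+1} Cardinal.aleph0 :=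
          Cardinal.lift_le.mpr h2
      _ = Cardinal.aleph0 := Cardinal.lift_aleph0
  have inv : ∀ α, α < (Cardinal.aleph 1).ord → IsOpen (g α).1 ∧ z ∈ (g α).1 ∧
      IsOpen (g α).2 ∧ (g α).2.Nonempty ∧
      (g α).2 ⊆ ⋂₀ ((fun β => (g β).1) '' Set.Iio α) ∧ Disjoint (g α).2 (g α).1 := by
    intro α
    induction α using Ordinal.induction with
    | h α ih =>
      intro hα
      have hSc := ((hIio α hα).image (fun β => (g β).1))
      have hS : ∀ U ∈ (fun β => (g β).1) '' Set.Iio α, IsOpen U ∧ z ∈ U := by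
        rintro U ⟨β, hβ, rfl⟩
        obtain ⟨h1, h2, -⟩ := ih β hβ (hβ.trans hα)
        exact ⟨h1, h2⟩
      rw [hgeq α]
      exact hF _ hSc hS
  have hdisj : ∀ α β, α < (Cardinal.aleph 1).ord → β < α →
      Disjoint (g α).2 (g β).2 := by
    intro α β hα hβ
    have h1 : (g α).2 ⊆ (g β).1 := fun x hx =>
      ((inv α hα).2.2.2.2.1 hx) _ (Set.mem_image_of_mem _ hβ)
    exact Disjoint.mono_left h1 ((inv β (hβ.trans hα)).2.2.2.2.2.symm)
  refine ⟨(fun α => (g α).2) '' Set.Iio ((Cardinal.aleph 1).ord), ?_, ?_, ?_⟩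
  · rintro U ⟨α, hα, rfl⟩
    exact ⟨(inv α hα).2.2.1, (inv α hα).2.2.2.1⟩
  · rintro U ⟨α, hα, rfl⟩ V ⟨β, hβ, rfl⟩ hne
    simp only [id]
    rcases lt_trichotomy α β with h | h | h
    · exact (hdisj β α hβ h).symm
    · exact absurd (by rw [h]) hne
    · exact hdisj α β hα h
  · intro hc
    have hinj : ∀ a ∈ Set.Iio ((Cardinal.aleph 1).ord),
        ∀ b ∈ Set.Iio ((Cardinal.aleph 1).ord), (g a).2 = (g b).2 → a = b := by
      intro a ha b hb hab
      by_contra hne'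
      rcases lt_trichotomy a b with h | h | h
      · have hd := hdisj b a hb h
        rw [hab] at hd
        exact absurd (disjoint_self.mp hd)
          (Set.nonempty_iff_ne_empty.mp (inv b hb).2.2.2.1)
      · exact hne' h
      · have hd := hdisj a b ha h
        rw [hab] at hd
        exact absurd (disjoint_self.mp hd)
          (Set.nonempty_iff_ne_empty.mp (inv b hb).2.2.2.1)
    have hcnt : Countable (Set.Iio ((Cardinal.aleph 1).ord)) := by
      have := hc.to_subtype
      have he : Function.Injective (fun a : Set.Iio ((Cardinal.aleph 1).ord) =>
          (⟨(g a.1).2, Set.mem_image_of_mem _ a.2⟩ :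
            ((fun α => (g α).2) '' Set.Iio ((Cardinal.aleph 1).ord)))) := by
        intro a b h
        exact Subtype.ext (hinj a.1 a.2 b.1 b.2 (congrArg Subtype.val h))
      exact he.countable
    have hcard : Cardinal.mk (Set.Iio ((Cardinal.aleph 1).ord)) ≤ Cardinal.aleph0 :=
      Cardinal.mk_le_aleph0
    rw [Ordinal.mk_Iio_ordinal, Cardinal.card_ord] at hcard
    have hle : Cardinal.aleph.{u} 1 ≤ Cardinal.aleph0.{u} := by
      simpa using hcard
    exact absurd hle (not_le.mpr Cardinal.aleph0_lt_aleph_one)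
end

section
/- Let X be a Tychonoff space and let X_{ℵ₀} denote X equipped with the Baire topology. Then X_{ℵ₀} has countable cellularity (every pairwise disjoint family of nonempty open subsets of X_{ℵ₀} is countable) if and only if X is countable. -/
open Set Filter Topology TopologicalSpace

universe u v

section ZeroSetLemmas

variable {X : Type u} [TopologicalSpace X]

lemma isZeroSet_univ' : IsZeroSet (Set.univ : Set X) :=
  ⟨fun _ => 0, continuous_const, by ext x; simp⟩

lemma IsZeroSet.inter' {F G : Set X} (hF : IsZeroSet F) (hG : IsZeroSet G) :
    IsZeroSet (F ∩ G) := by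
  obtain ⟨f, hf, rfl⟩ := hF; obtain ⟨g, hg, rfl⟩ := hG
  refine ⟨fun x => |f x| + |g x|, hf.abs.add hg.abs, ?_⟩
  ext x
  simp only [Set.mem_inter_iff, Set.mem_preimage, Set.mem_singleton_iff]
  constructor
  · rintro ⟨h1, h2⟩; rw [h1, h2]; simp
  · intro h
    obtain ⟨h1, h2⟩ := (add_eq_zero_iff_of_nonneg (abs_nonneg (f x)) (abs_nonneg (g x))).mp h
    exact ⟨abs_eq_zero.mp h1, abs_eq_zero.mp h2⟩

lemma isZeroSet_iInter' {ι : Type v} [Countable ι] {F : ι → Set X}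
    (h : ∀ i, IsZeroSet (F i)) : IsZeroSet (⋂ i, F i) := by
  choose f hf hFf using h
  obtain ⟨e, he⟩ := Countable.exists_injective_nat ι
  set u : ι → ℝ := fun i => (1 / 2 : ℝ) ^ e i with hu
  have hus : Summable u := summable_geometric_two.comp_injective he
  set g : ι → X → ℝ := fun i x => u i * min |f i x| 1 with hg
  have hg0 : ∀ i x, 0 ≤ g i x := by
    intro i x
    have h0 : (0:ℝ) ≤ min |f i x| 1 := le_min (abs_nonneg _) one_pos.le
    have hup : (0:ℝ) ≤ u i := by positivity
    exact mul_nonneg hup h0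
  have hbnd : ∀ i x, ‖g i x‖ ≤ u i := by
    intro i x
    have h1 : min |f i x| 1 ≤ 1 := min_le_right _ _
    have hup : (0:ℝ) ≤ u i := by positivity
    rw [Real.norm_eq_abs, abs_of_nonneg (hg0 i x)]
    exact mul_le_of_le_one_right hup h1
  have hgc : ∀ i, Continuous (g i) :=
    fun i => continuous_const.mul (((hf i).abs).min continuous_const)
  refine ⟨fun x => ∑' i, g i x, continuous_tsum hgc hus hbnd, ?_⟩
  ext x
  simp only [Set.mem_iInter, Set.mem_preimage, Set.mem_singleton_iff]
  constructor
  · intro hx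
    have hall : ∀ i, g i x = 0 := by
      intro i
      have hxi := hx i
      rw [hFf i] at hxi
      simp only [Set.mem_preimage, Set.mem_singleton_iff] at hxi
      simp [hg, hxi]
    simp [hall]
  · intro hx i
    have hsx : Summable fun i => g i x :=
      hus.of_nonneg_of_le (fun i => hg0 i x) (fun i => by
        have := hbnd i x; rwa [Real.norm_eq_abs, abs_of_nonneg (hg0 i x)] at this)
    have hle : g i x ≤ 0 := by
      have := Summable.le_tsum hsx i (fun j _ => hg0 j x)
      rwa [hx] at this
    have hgi : g i x = 0 := le_antisymm hle (hg0 i x)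
    have hui : (0:ℝ) < u i := by positivity
    have hmin : min |f i x| 1 = 0 := by
      rcases mul_eq_zero.mp hgi with h | h
      · exact absurd h (ne_of_gt hui)
      · exact h
    have : |f i x| = 0 := by
      rcases min_eq_iff.mp hmin with ⟨h, _⟩ | ⟨h, _⟩
      · exact h
      · norm_num at h
    rw [hFf i]
    simpa using abs_eq_zero.mp this

lemma IsZeroSet.baireOpen' {F : Set X} (h : IsZeroSet F) :
    @IsOpen X (baireTopology X) F :=
  TopologicalSpace.isOpen_generateFrom_of_mem h

lemma exists_zeroSet_sep' [T1Space X] [CompletelyRegularSpace X] {x y : X} (hxy : x ≠ y) :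
    ∃ Z : Set X, IsZeroSet Z ∧ x ∈ Z ∧ y ∉ Z := by
  obtain ⟨f, hf, hfx, hfy⟩ := CompletelyRegularSpace.completely_regular x {y}
    isClosed_singleton (by simpa using hxy)
  refine ⟨(fun z => min ((1:ℝ)/2 - (f z : ℝ)) 0) ⁻¹' {0},
    ⟨_, (continuous_const.sub (continuous_subtype_val.comp hf)).min continuous_const, rfl⟩,
    ?_, ?_⟩
  · have : (f x : ℝ) = 0 := by rw [hfx]; rfl
    simp only [Set.mem_preimage, Set.mem_singleton_iff, this]
    norm_num
  · have : (f y : ℝ) = 1 := by rw [hfy rfl]; rfl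
    simp only [Set.mem_preimage, Set.mem_singleton_iff, this]
    norm_num

lemma exists_zeroSet_avoid' {Z : Set X} (hZ : IsZeroSet Z) {p : X} (hp : p ∉ Z) :
    ∃ W : Set X, IsZeroSet W ∧ p ∈ W ∧ W ∩ Z = ∅ := by
  obtain ⟨g, hg, rfl⟩ := hZ
  have hgp : g p ≠ 0 := by simpa using hp
  have hc : (0:ℝ) < |g p| := abs_pos.mpr hgp
  refine ⟨(fun z => min (|g z| - |g p|) 0) ⁻¹' {0},
    ⟨_, (hg.abs.sub continuous_const).min continuous_const, rfl⟩, ?_, ?_⟩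
  · simp
  · rw [Set.eq_empty_iff_forall_notMem]
    rintro z ⟨h1, h2⟩
    simp only [Set.mem_preimage, Set.mem_singleton_iff] at h1 h2
    rw [h2] at h1
    simp only [abs_zero, zero_sub] at h1
    rw [min_eq_left (by linarith)] at h1
    linarith

open Classical in
noncomputable def zChain {X : Type u} (S : Set (Set X)) : Ordinal.{0} → Set X :=
  WellFounded.fix Ordinal.lt_wf fun o ih =>
    if h : ∃ W, W ∈ S ∧ W ⊆ (⋂ p : Set.Iio o, ih p.1 p.2) ∧
        ((⋂ p : Set.Iio o, ih p.1 p.2) \ W).Nonempty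
    then h.choose else ∅

open Classical in
lemma zChain_eq {X : Type u} (S : Set (Set X)) (o : Ordinal.{0}) :
    zChain S o =
      if h : ∃ W, W ∈ S ∧ W ⊆ (⋂ p : Set.Iio o, zChain S p.1) ∧
          ((⋂ p : Set.Iio o, zChain S p.1) \ W).Nonempty
      then h.choose else ∅ :=
  WellFounded.fix_eq _ _ _

end ZeroSetLemmas

set_option maxHeartbeats 1000000 in
lemma singleton_isZeroSet {X : Type u} [TopologicalSpace X]
    [T1Space X] [CompletelyRegularSpace X]
    (H : ∀ 𝒰 : Set (Set X), (∀ U ∈ 𝒰, @IsOpen X (baireTopology X) U ∧ U.Nonempty) →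
      𝒰.PairwiseDisjoint id → 𝒰.Countable) : ∀ x : X, IsZeroSet ({x} : Set X) := by
  intro x
  by_contra hx
  set S : Set (Set X) := {Z | IsZeroSet Z ∧ x ∈ Z} with hS
  -- shrinking lemma
  have shrink : ∀ T ∈ S, ∃ W, W ∈ S ∧ W ⊆ T ∧ (T \ W).Nonempty := by
    rintro T ⟨hTz, hxT⟩
    have hTne : T ≠ {x} := fun h => hx (h ▸ hTz)
    have hy : ∃ y ∈ T, y ≠ x := by
      by_contra hcon
      push_neg at hcon
      apply hTne
      apply Set.Subset.antisymm
      · intro z hz; simp [hcon z hz]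
      · intro z hz; simp only [Set.mem_singleton_iff] at hz; rwa [hz]
    obtain ⟨y, hyT, hyx⟩ := hy
    obtain ⟨Z', hZ'z, hxZ', hyZ'⟩ := exists_zeroSet_sep' (Ne.symm hyx)
    exact ⟨T ∩ Z', ⟨hTz.inter' hZ'z, ⟨hxT, hxZ'⟩⟩, Set.inter_subset_left,
      ⟨y, hyT, fun h => hyZ' h.2⟩⟩
  set ω₁ : Ordinal.{0} := (Cardinal.aleph 1).ord with hω₁
  have hcnt : ∀ o : Ordinal.{0}, o < ω₁ → Countable (Set.Iio o) := by
    intro o ho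
    have h1 : o.card ≤ Cardinal.aleph0 := by
      have := Cardinal.lt_ord.mp ho
      rwa [← Cardinal.succ_aleph0, Order.lt_succ_iff] at this
    have h2 : Countable o.ToType :=
      Cardinal.mk_le_aleph0_iff.mp (by rwa [Cardinal.mk_toType])
    exact Countable.of_equiv _ (Ordinal.ToType.mk (o := o)).toEquiv.symm
  have key : ∀ o : Ordinal.{0}, o < ω₁ →
      zChain S o ∈ S ∧ zChain S o ⊆ (⋂ p : Set.Iio o, zChain S p.1) ∧
        ((⋂ p : Set.Iio o, zChain S p.1) \ zChain S o).Nonempty := by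
    intro o
    induction o using Ordinal.induction with
    | h o IH =>
      intro ho
      haveI := hcnt o ho
      have hT : (⋂ p : Set.Iio o, zChain S p.1) ∈ S := by
        refine ⟨isZeroSet_iInter' fun p => (IH p.1 p.2 (p.2.trans ho)).1.1,
          Set.mem_iInter.mpr fun p => (IH p.1 p.2 (p.2.trans ho)).1.2⟩
      have hex : ∃ W, W ∈ S ∧ W ⊆ (⋂ p : Set.Iio o, zChain S p.1) ∧
          ((⋂ p : Set.Iio o, zChain S p.1) \ W).Nonempty := shrink _ hT
      rw [zChain_eq, dif_pos hex]
      exact hex.choose_spec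
  -- Step 2: a pairwise disjoint uncountable family
  have hV : ∀ α : Set.Iio ω₁, ∃ V : Set X, IsZeroSet V ∧ V.Nonempty ∧
      V ⊆ (⋂ p : Set.Iio α.1, zChain S p.1) ∧ V ∩ zChain S α.1 = ∅ := by
    rintro ⟨α, hα⟩
    haveI := hcnt α hα
    obtain ⟨⟨hZz, -⟩, hsub, ⟨q, hqT, hqZ⟩⟩ := key α hα
    obtain ⟨W, hWz, hqW, hWZ⟩ := exists_zeroSet_avoid' hZz hqZ
    have hTz : IsZeroSet (⋂ p : Set.Iio α, zChain S p.1) :=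
      isZeroSet_iInter' fun p => (key p.1 (p.2.trans hα)).1.1
    refine ⟨(⋂ p : Set.Iio α, zChain S p.1) ∩ W,
      hTz.inter' hWz,
      ⟨q, hqT, hqW⟩, Set.inter_subset_left, ?_⟩
    rw [Set.eq_empty_iff_forall_notMem]
    rintro z ⟨⟨-, hzW⟩, hzZ⟩
    exact Set.eq_empty_iff_forall_notMem.mp hWZ z ⟨hzW, hzZ⟩
  choose V hV1 hV2 hV3 hV4 using hV
  have hdisjlt : ∀ α β : Set.Iio ω₁, β.1 < α.1 → Disjoint (V α) (V β) := by
    intro α β hlt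
    rw [Set.disjoint_left]
    intro z hzα hzβ
    have hz1 : z ∈ zChain S β.1 := Set.mem_iInter.mp (hV3 α hzα) ⟨β.1, hlt⟩
    exact Set.eq_empty_iff_forall_notMem.mp (hV4 β) z ⟨hzβ, hz1⟩
  have hdisj : ∀ α β : Set.Iio ω₁, α ≠ β → Disjoint (V α) (V β) := by
    intro α β hne
    rcases lt_or_gt_of_ne (fun h : α.1 = β.1 => hne (Subtype.ext h)) with h | h
    · exact (hdisjlt β α h).symm
    · exact hdisjlt α β h
  have hUcount : (Set.range V).Countable := by
    apply H
    · rintro U ⟨α, rfl⟩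
      exact ⟨(hV1 α).baireOpen', hV2 α⟩
    · rintro U ⟨α, rfl⟩ U' ⟨β, rfl⟩ hne
      exact hdisj α β (by rintro rfl; exact hne rfl)
  have hinj : Function.Injective V := by
    intro α β h
    by_contra hne
    have hd := hdisj α β hne
    rw [h] at hd
    obtain ⟨z, hz⟩ := hV2 β
    exact Set.disjoint_left.mp hd hz hz
  haveI : Countable (Set.range V) := Set.countable_coe_iff.mpr hUcount
  haveI : Countable (Set.Iio ω₁) := Countable.of_equiv _ (Equiv.ofInjective V hinj).symm
  haveI h1 : Countable ω₁.ToType := Countable.of_equiv _ (Ordinal.ToType.mk (o := ω₁)).toEquiv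
  have h2 : Cardinal.aleph 1 ≤ Cardinal.aleph0 := by
    have := Cardinal.mk_le_aleph0_iff.mpr h1
    rwa [Cardinal.mk_toType, Cardinal.card_ord] at this
  exact absurd h2 (not_le.mpr Cardinal.aleph0_lt_aleph_one)

/-- For a Tychonoff space `X`, the space `X_{ℵ₀}` (i.e. `X` with the
Baire topology) has countable cellularity iff `X` is countable. -/
theorem baire_countable_cellularity_iff_countable {X : Type u} [TopologicalSpace X]
    [T1Space X] [CompletelyRegularSpace X] :
    (∀ 𝒰 : Set (Set X), (∀ U ∈ 𝒰, @IsOpen X (baireTopology X) U ∧ U.Nonempty) →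
      𝒰.PairwiseDisjoint id → 𝒰.Countable) ↔ Countable X := by
  constructor
  · intro H
    have hsing := singleton_isZeroSet H
    have hc : (Set.range fun y : X => ({y} : Set X)).Countable := by
      apply H
      · rintro U ⟨y, rfl⟩
        exact ⟨(hsing y).baireOpen', Set.singleton_nonempty y⟩
      · rintro U ⟨a, rfl⟩ U' ⟨b, rfl⟩ hne
        exact Set.disjoint_singleton.mpr fun h => hne (congrArg _ h)
    haveI : Countable (Set.range fun y : X => ({y} : Set X)) := Set.countable_coe_iff.mpr hc
    exact Countable.of_equiv _ (Equiv.ofInjective _ Set.singleton_injective).symm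
  · intro hX 𝒰 h1 h2
    rw [← Set.countable_coe_iff]
    have pick : ∀ U : 𝒰, ∃ z : X, z ∈ (U : Set X) := fun U => (h1 U U.2).2
    choose f hf using pick
    have hinj : Function.Injective f := by
      intro U V h
      by_contra hne
      have hd : Disjoint (U : Set X) (V : Set X) :=
        h2 U.2 V.2 fun hc => hne (Subtype.ext hc)
      exact Set.disjoint_left.mp hd (hf U) (h ▸ hf V)
    exact hinj.countable
end

section
/- Let Y be a Tychonoff space containing an infinite closed and discrete subspace D = {y_n}_{n∈ω} (with the y_n pairwise distinct), let X be an uncountable Y-z-Tychonoff metrizable compact space, and let H be a subspace of Y^X (with the topology of pointwise convergence) containing B_1^{st}(X,Y). Then H contains a subspace 𝓕 ⊆ B_1^{st}(X,Y) of cardinality 2^{ℵ₀} that is closed and discrete in H (in fact, closed and discrete in Y^X) and such that f(X) ⊆ D for every f ∈ 𝓕. -/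
open Set Filter Topology TopologicalSpace

universe u v

namespace CDCAux

open Classical in
noncomputable def splitIdx (a b : ℕ → Bool) : ℕ :=
  if h : ∃ n, a n ≠ b n then Nat.find h else 0

theorem splitIdx_ne {a b : ℕ → Bool} (h : a ≠ b) :
    a (splitIdx a b) ≠ b (splitIdx a b) := by
  have he : ∃ n, a n ≠ b n := Function.ne_iff.mp h
  unfold splitIdx
  rw [dif_pos he]
  exact Nat.find_spec he

theorem splitIdx_eq {a b : ℕ → Bool} (h : a ≠ b) {k : ℕ} (hk : k < splitIdx a b) :
    a k = b k := by
  have he : ∃ n, a n ≠ b n := Function.ne_iff.mp h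
  unfold splitIdx at hk
  rw [dif_pos he] at hk
  have := Nat.find_min he hk
  simpa using this

theorem lt_splitIdx {a b : ℕ → Bool} (h : a ≠ b) {m : ℕ}
    (hm : ∀ k ≤ m, a k = b k) : m < splitIdx a b := by
  by_contra hc
  push_neg at hc
  exact splitIdx_ne h (hm _ hc)

theorem splitIdx_unique {a t : ℕ → Bool} (hne : a ≠ t) {i : ℕ}
    (hb : ∀ k < i, a k = t k) (ha : a i ≠ t i) : splitIdx a t = i := by
  rcases lt_trichotomy (splitIdx a t) i with h | h | h
  · exact absurd (hb _ h) (splitIdx_ne hne)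
  · exact h
  · exact absurd (splitIdx_eq hne h) ha

end CDCAux

/-- Let `Y` be Tychonoff with an infinite closed discrete subspace
`D = {y n}`, let `X` be an uncountable `Y`-z-Tychonoff metrizable compact space, and let
`H ⊆ Y^X` (pointwise topology) contain `B₁ˢᵗ(X,Y)`. Then `H` contains a subspace
`𝓕 ⊆ B₁ˢᵗ(X,Y)` of cardinality `𝔠` that is closed and discrete in `H` (in fact in
`Y^X`) with `f(X) ⊆ D` for every `f ∈ 𝓕`. -/
theorem exists_closed_discrete_continuum {X : Type u} {Y : Type v}
    [TopologicalSpace X] [TopologicalSpace Y] [T1Space Y] [CompletelyRegularSpace Y]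
    (y : ℕ → Y) (hyinj : Function.Injective y)
    (hyclosed : IsClosed (Set.range y))
    (hydisc : ∀ n : ℕ, ∃ U : Set Y, IsOpen U ∧ U ∩ Set.range y = {y n})
    [Uncountable X] [TopologicalSpace.MetrizableSpace X] [CompactSpace X]
    (hXT : YzTychonoff X Y)
    (H : Set (X → Y)) (hH : BaireOneStable X Y ⊆ H) :
    ∃ F : Set (X → Y), F ⊆ BaireOneStable X Y ∧ F ⊆ H ∧
      Cardinal.mk ↥F = Cardinal.continuum ∧
      IsClosed F ∧ DiscreteTopology ↥F ∧
      IsClosed (Subtype.val ⁻¹' F : Set ↥H) ∧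
      ∀ f ∈ F, Set.range f ⊆ Set.range y := by
    classical
  letI : MetricSpace X := TopologicalSpace.metrizableSpaceMetric X
  obtain ⟨φ, -, hφc, hφi⟩ :=
    IsClosed.exists_nat_bool_injection_of_not_countable (C := (Set.univ : Set X))
      isClosed_univ (by rw [Set.countable_univ_iff]; exact not_countable)
  set C : Set X := Set.range φ with hCdef
  have hCcl : IsClosed C := (isCompact_range hφc).isClosed
  have hCne : C.Nonempty := ⟨φ (fun _ => false), Set.mem_range_self _⟩
  set ψ : X → (ℕ → Bool) := Function.invFun φ with hψdef
  have hψ : ∀ a, ψ (φ a) = a := fun a => Function.leftInverse_invFun hφi a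
  set FF : (ℕ → Bool) → X → Y := fun t x =>
    if x ∈ C then (if ψ x = t then y 0 else y (CDCAux.splitIdx (ψ x) t + 1)) else y 0
    with hFFdef
  have hFφ : ∀ t a, FF t (φ a) =
      if a = t then y 0 else y (CDCAux.splitIdx a t + 1) := by
    intro t a
    have hx : φ a ∈ C := Set.mem_range_self a
    simp only [hFFdef]
    rw [if_pos hx, hψ]
  have hFnot : ∀ t x, x ∉ C → FF t x = y 0 := by
    intro t x hx
    simp only [hFFdef]
    rw [if_neg hx]
  have hFrange : ∀ t x, FF t x ∈ Set.range y := by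
    intro t x
    simp only [hFFdef]
    split
    · split
      · exact Set.mem_range_self _
      · exact Set.mem_range_self _
    · exact Set.mem_range_self _
  set 𝓕 : Set (X → Y) := Set.range FF with h𝓕def
  choose U hUopen hUiso using hydisc
  have hUy : ∀ n, y n ∈ U n := by
    intro n
    have h : y n ∈ U n ∩ Set.range y := by
      rw [hUiso n]; exact rfl
    exact h.1
  have hUeq : ∀ n z, z ∈ Set.range y → z ∈ U n → z = y n := by
    intro n z hz hU
    have h : z ∈ U n ∩ Set.range y := ⟨hU, hz⟩
    rwa [hUiso n] at h
  have hsubclosed : ∀ S : Set Y, S ⊆ Set.range y → IsClosed S := by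
    intro S hS
    refine isClosed_of_closure_subset fun z hz => ?_
    have hzr : z ∈ Set.range y := hyclosed.closure_subset ((closure_mono hS) hz)
    obtain ⟨n, rfl⟩ := hzr
    obtain ⟨w, hwU, hwS⟩ := mem_closure_iff.mp hz (U n) (hUopen n) (hUy n)
    have hw := hUeq n w (hS hwS) hwU
    rwa [← hw]
  have hforced : ∀ (t : ℕ → Bool) (x : X) (n : ℕ), FF t x ∈ U n → FF t x = y n :=
    fun t x n h => hUeq n _ (hFrange t x) h
  have hval : ∀ g, g ∈ closure 𝓕 → ∀ x, g x ∈ Set.range y := by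
    intro g hg x
    have h1 : g x ∈ closure ((fun h : X → Y => h x) '' 𝓕) :=
      (image_closure_subset_closure_image (continuous_apply x)) ⟨g, hg, rfl⟩
    have h2 : IsClosed ((fun h : X → Y => h x) '' 𝓕) :=
      hsubclosed _ (by rintro _ ⟨f, ⟨t, rfl⟩, rfl⟩; exact hFrange t x)
    obtain ⟨f, ⟨t, rfl⟩, hfx⟩ := h2.closure_subset h1
    rw [← hfx]; exact hFrange t x
  have happrox : ∀ g ∈ closure 𝓕, ∀ E : Finset X, ∀ V : X → Set Y,
      (∀ x ∈ E, IsOpen (V x)) → (∀ x ∈ E, g x ∈ V x) →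
      ∃ t : ℕ → Bool, ∀ x ∈ E, FF t x ∈ V x := by
    intro g hg E V hVo hgV
    have hopen : IsOpen ((↑E : Set X).pi V) :=
      isOpen_set_pi E.finite_toSet (fun x hx => hVo x hx)
    have hmem : g ∈ (↑E : Set X).pi V := fun x hx => hgV x hx
    obtain ⟨f, hfV, t, rfl⟩ := mem_closure_iff.mp hg _ hopen hmem
    exact ⟨t, fun x hx => hfV x hx⟩
  -- 𝓕 is closed
  have hclosed : IsClosed 𝓕 := by
    refine isClosed_of_closure_subset fun g hg => ?_
    by_cases hcase : ∃ t, g (φ t) = y 0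
    · obtain ⟨t, ht⟩ := hcase
      have hgt : g = FF t := by
        funext x
        by_cases hxt : x = φ t
        · subst hxt
          rw [ht, hFφ t t, if_pos rfl]
        · obtain ⟨m, hm⟩ := hval g hg x
          obtain ⟨s, hs⟩ := happrox g hg {x, φ t}
            (fun z => if z = φ t then U 0 else U m)
            (by intro z _; by_cases h : z = φ t <;> simp [h, hUopen])
            (by
              intro z hz
              rcases Finset.mem_insert.mp hz with rfl | hz'
              · simp only [if_neg hxt]
                rw [← hm]; exact hUy m
              · have hz2 : z = φ t := Finset.mem_singleton.mp hz'
                subst hz2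
                simp only [if_pos rfl]
                rw [ht]; exact hUy 0)
          have hsx : FF s x ∈ U m := by
            have h := hs x (Finset.mem_insert_self _ _)
            rwa [if_neg hxt] at h
          have hst : FF s (φ t) ∈ U 0 := by
            have h := hs (φ t) (by simp)
            rwa [if_pos rfl] at h
          have hst0 : FF s (φ t) = y 0 := hforced s (φ t) 0 hst
          have hts : t = s := by
            by_contra hne
            rw [hFφ s t, if_neg hne] at hst0
            have := hyinj hst0; omega
          subst hts
          rw [← hm]
          exact (hforced t x m hsx).symm
      exact ⟨t, hgt.symm⟩
    · push_neg at hcase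
      exfalso
      have hh : ∀ a : ℕ → Bool, ∃ m, g (φ a) = y (m + 1) := by
        intro a
        obtain ⟨k, hk⟩ := hval g hg (φ a)
        cases k with
        | zero => exact absurd hk.symm (hcase a)
        | succ m => exact ⟨m, hk.symm⟩
      choose lev hlev using hh
      have hpair : ∀ a b : ℕ → Bool, (∀ k, k < lev a → b k = a k) →
          b (lev a) ≠ a (lev a) → lev a < lev b := by
        intro a b hbelow hat
        have hab : a ≠ b := fun e => hat (by rw [e])
        have hφab : φ a ≠ φ b := fun e => hab (hφi e)
        obtain ⟨t, hs⟩ := happrox g hg {φ a, φ b}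
          (fun z => if z = φ a then U (lev a + 1) else U (lev b + 1))
          (by intro z _; by_cases h : z = φ a <;> simp [h, hUopen])
          (by
            intro z hz
            rcases Finset.mem_insert.mp hz with rfl | hz'
            · simp only [if_pos rfl]
              rw [hlev a]; exact hUy _
            · have hz2 : z = φ b := Finset.mem_singleton.mp hz'
              subst hz2
              simp only [if_neg (Ne.symm hφab)]
              rw [hlev b]; exact hUy _)
        have hta : FF t (φ a) ∈ U (lev a + 1) := by
          have h := hs (φ a) (Finset.mem_insert_self _ _)
          rwa [if_pos rfl] at h
        have htb : FF t (φ b) ∈ U (lev b + 1) := by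
          have h := hs (φ b) (by simp)
          rwa [if_neg (Ne.symm hφab)] at h
        have hta' : FF t (φ a) = y (lev a + 1) := hforced _ _ _ hta
        have htb' : FF t (φ b) = y (lev b + 1) := hforced _ _ _ htb
        have hat' : a ≠ t := by
          rintro rfl
          rw [hFφ, if_pos rfl] at hta'
          have := hyinj hta'; omega
        have hsa : CDCAux.splitIdx a t = lev a := by
          rw [hFφ, if_neg hat'] at hta'
          have := hyinj hta'; omega
        have hbt' : b ≠ t := by
          rintro rfl
          rw [hFφ, if_pos rfl] at htb'
          have := hyinj htb'; omega
        have hsb : CDCAux.splitIdx b t = lev b := by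
          rw [hFφ, if_neg hbt'] at htb'
          have := hyinj htb'; omega
        have hagree : ∀ k, k ≤ lev a → b k = t k := by
          intro k hk
          rcases lt_or_eq_of_le hk with hk' | rfl
          · rw [hbelow k hk']
            exact CDCAux.splitIdx_eq hat' (by rw [hsa]; exact hk')
          · have h1 : a (lev a) ≠ t (lev a) := by
              have h2 := CDCAux.splitIdx_ne hat'
              rwa [hsa] at h2
            have hbool : ∀ p q r : Bool, p ≠ r → q ≠ r → p = q := by decide
            exact hbool _ _ _ hat (Ne.symm h1)
        have hlt := CDCAux.lt_splitIdx hbt' hagree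
        rwa [hsb] at hlt
      set flip : (ℕ → Bool) → (ℕ → Bool) := fun b i => if i = lev b then !(b i) else b i
        with hflip
      set seq : ℕ → (ℕ → Bool) :=
        fun n => Nat.rec (motive := fun _ => ℕ → Bool) (fun _ => false) (fun _ b => flip b) n
        with hseq
      have hseqsucc : ∀ n, seq (n + 1) = flip (seq n) := fun n => rfl
      have hstep : ∀ n, lev (seq n) < lev (seq (n + 1)) := by
        intro n
        apply hpair (seq n) (seq (n + 1))
        · intro k hk
          rw [hseqsucc]
          simp only [hflip]
          rw [if_neg (Nat.ne_of_lt hk)]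
        · rw [hseqsucc]
          simp only [hflip]
          simp
      have hmono : StrictMono fun n => lev (seq n) := strictMono_nat_of_lt_succ hstep
      have hge : ∀ n, n ≤ lev (seq n) := fun n => hmono.le_apply
      have hstab : ∀ n m, n ≤ m → ∀ i, i ≤ lev (seq n) → seq (n + 1) i = seq (m + 1) i := by
        intro n m hnm
        induction m, hnm using Nat.le_induction with
        | base => intro i _; rfl
        | succ m hm ih =>
          intro i hi
          have h2 : i < lev (seq (m + 1)) :=
            lt_of_le_of_lt (hi.trans (hmono.monotone hm)) (hstep m)
          rw [ih i hi, hseqsucc (m + 1)]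
          simp only [hflip]
          rw [if_neg (Nat.ne_of_lt h2)]
      set z : ℕ → Bool := fun i => seq (i + 1) i with hzdef
      have hzi : ∀ n i, i ≤ lev (seq n) → z i = seq (n + 1) i := by
        intro n i hi
        by_cases hin : i ≤ n
        · exact hstab i n hin i (hge i)
        · exact (hstab n i (le_of_not_ge hin) i hi).symm
      have hzflip : ∀ n, lev (seq n) < lev z := by
        intro n
        apply hpair (seq n) z
        · intro k hk
          rw [hzi n k (le_of_lt hk), hseqsucc]
          simp only [hflip]
          rw [if_neg (Nat.ne_of_lt hk)]
        · rw [hzi n _ le_rfl, hseqsucc]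
          simp only [hflip]
          simp
      have h1 := hzflip (lev z)
      have h2 := hge (lev z)
      omega
  -- zero sets
  have hzeroset : ∀ S : Set X, IsClosed S → IsZeroSet S := by
    intro S hS
    rcases S.eq_empty_or_nonempty with rfl | hne
    · exact ⟨fun _ => 1, continuous_const, by ext x; simp⟩
    · refine ⟨fun x => Metric.infDist x S, Metric.continuous_infDist_pt S, ?_⟩
      ext x
      simp only [Set.mem_preimage, Set.mem_singleton_iff]
      exact hS.mem_iff_infDist_zero hne
  have hcylcl : ∀ (t : ℕ → Bool) (i : ℕ),
      IsClosed {a : ℕ → Bool | a ≠ t ∧ CDCAux.splitIdx a t = i} := by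
    intro t i
    have heq : {a : ℕ → Bool | a ≠ t ∧ CDCAux.splitIdx a t = i}
        = (⋂ k ∈ Finset.range i, {a : ℕ → Bool | a k = t k}) ∩ {a | a i ≠ t i} := by
      ext a
      simp only [Set.mem_setOf_eq, Set.mem_inter_iff, Set.mem_iInter, Finset.mem_range]
      constructor
      · rintro ⟨hne, rfl⟩
        exact ⟨fun k hk => CDCAux.splitIdx_eq hne hk, CDCAux.splitIdx_ne hne⟩
      · rintro ⟨hbelow, hat⟩
        have hne : a ≠ t := fun e => hat (by rw [e])
        exact ⟨hne, CDCAux.splitIdx_unique hne hbelow hat⟩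
    rw [heq]
    refine IsClosed.inter ?_ ?_
    · refine isClosed_biInter fun k _ => ?_
      have hcl : IsClosed ((fun p : ℕ → Bool => p k) ⁻¹' {t k}) :=
        IsClosed.preimage (continuous_apply k) (isClosed_discrete _)
      exact hcl
    · have hcl : IsClosed ((fun p : ℕ → Bool => p i) ⁻¹' ({t i}ᶜ)) :=
        IsClosed.preimage (continuous_apply i) (isClosed_discrete _)
      exact hcl
  have hZcl : ∀ (t : ℕ → Bool) (i : ℕ),
      IsClosed (φ '' {a | a ≠ t ∧ CDCAux.splitIdx a t = i}) := by
    intro t i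
    exact (((hcylcl t i).isCompact).image hφc).isClosed
  -- stable Baire one
  have hB1 : ∀ t, FF t ∈ BaireOneStable X Y := by
    intro t
    have hAm : ∀ m : ℕ, IsClosed ({x : X | (1 : ℝ) / (m + 1) ≤ Metric.infDist x C} ∪ {φ t}) :=
      fun m => (isClosed_le continuous_const (Metric.continuous_infDist_pt C)).union
        isClosed_singleton
    have hgm : ∀ m : ℕ, ∃ f : X → Y, Continuous f ∧
        f '' ({x : X | (1 : ℝ) / (m + 1) ≤ Metric.infDist x C} ∪ {φ t}) ⊆ {y 0} ∧
        ∀ i : Fin m, f '' (φ '' {a | a ≠ t ∧ CDCAux.splitIdx a t = (i : ℕ)})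
          ⊆ {y ((i : ℕ) + 1)} := by
      intro m
      obtain ⟨f, hfc, hfA, hfZ⟩ := hXT.2 _ (hAm m) m
        (fun i => φ '' {a | a ≠ t ∧ CDCAux.splitIdx a t = (i : ℕ)})
        (fun i => hzeroset _ (hZcl t i))
        (fun i j hij => by
          rw [Set.disjoint_left]
          rintro x ⟨a, ⟨ha1, ha2⟩, rfl⟩ ⟨b, ⟨hb1, hb2⟩, hba⟩
          have hba' : b = a := hφi hba
          subst hba'
          exact hij (Fin.ext (by rw [← ha2, ← hb2])))
        (by
          intro x hx
          simp only [Set.mem_iUnion] at hx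
          obtain ⟨i, a, ⟨ha1, ha2⟩, rfl⟩ := hx
          simp only [Set.mem_compl_iff, Set.mem_union, Set.mem_setOf_eq,
            Set.mem_singleton_iff]
          push_neg
          constructor
          · rw [Metric.infDist_zero_of_mem (Set.mem_range_self a)]
            positivity
          · exact fun e => ha1 (hφi e))
        (y 0) (fun i => y ((i : ℕ) + 1))
      exact ⟨f, hfc, hfA, hfZ⟩
    choose gm hgmc hgmA hgmZ using hgm
    refine ⟨gm, hgmc, ?_⟩
    intro x
    have key : ∃ M : ℕ, ∀ m, M ≤ m → gm m x = FF t x := by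
      by_cases hx : x ∈ C
      · obtain ⟨a, rfl⟩ := hx
        by_cases hat : a = t
        · subst hat
          refine ⟨0, fun m _ => ?_⟩
          have h1 : gm m (φ a) ∈ ({y 0} : Set Y) := hgmA m ⟨φ a, Or.inr rfl, rfl⟩
          rw [hFφ, if_pos rfl]
          exact h1
        · refine ⟨CDCAux.splitIdx a t + 1, fun m hm => ?_⟩
          have hi : CDCAux.splitIdx a t < m := hm
          have h1 : gm m (φ a) ∈ ({y (CDCAux.splitIdx a t + 1)} : Set Y) := by
            have h2 := hgmZ m ⟨CDCAux.splitIdx a t, hi⟩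
              ⟨φ a, ⟨a, ⟨hat, rfl⟩, rfl⟩, rfl⟩
            simpa using h2
          rw [hFφ, if_neg hat]
          exact h1
      · have hpos : 0 < Metric.infDist x C := (hCcl.notMem_iff_infDist_pos hCne).mp hx
        obtain ⟨M, hM⟩ := exists_nat_one_div_lt hpos
        refine ⟨M, fun m hm => ?_⟩
        have hle : (1 : ℝ) / (m + 1) ≤ 1 / (M + 1) := by
          apply one_div_le_one_div_of_le
          · positivity
          · have : (M : ℝ) ≤ m := Nat.cast_le.mpr hm
            linarith
        have h1 : gm m x ∈ ({y 0} : Set Y) :=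
          hgmA m ⟨x, Or.inl (hle.trans hM.le), rfl⟩
        rw [hFnot t x hx]
        exact h1
    obtain ⟨M, hM⟩ := key
    apply Set.Finite.subset (Set.finite_Iio M)
    intro m hm
    simp only [Set.mem_setOf_eq] at hm
    by_contra h
    simp only [Set.mem_Iio, not_lt] at h
    exact hm (hM m h)
  -- isolation
  have hiso : ∀ s t : ℕ → Bool, FF s (φ t) ∈ U 0 → s = t := by
    intro s t h
    have h0 : FF s (φ t) = y 0 := hforced _ _ _ h
    by_contra hne
    rw [hFφ, if_neg (Ne.symm hne)] at h0
    have := hyinj h0; omega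
  have hFFinj : Function.Injective FF := by
    intro s t hst
    have h1 : FF s (φ t) = FF t (φ t) := by rw [hst]
    rw [hFφ, hFφ, if_pos rfl] at h1
    by_contra hne
    rw [if_neg (Ne.symm hne)] at h1
    have := hyinj h1; omega
  have hdisc : DiscreteTopology ↥𝓕 := by
    rw [discreteTopology_iff_isOpen_singleton]
    rintro ⟨f, t, rfl⟩
    have heq : ({⟨FF t, ⟨t, rfl⟩⟩} : Set ↥𝓕) =
        Subtype.val ⁻¹' {h : X → Y | h (φ t) ∈ U 0} := by
      ext ⟨f', s, rfl⟩
      simp only [Set.mem_singleton_iff, Set.mem_preimage, Set.mem_setOf_eq,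
        Subtype.mk.injEq]
      constructor
      · intro h
        rw [Subtype.mk.inj h, hFφ, if_pos rfl]
        exact hUy 0
      · intro h
        rw [hiso s t h]
    rw [heq]
    exact ((hUopen 0).preimage (continuous_apply (φ t))).preimage continuous_subtype_val
  refine ⟨𝓕, ?_, ?_, ?_, hclosed, hdisc, ?_, ?_⟩
  · rintro f ⟨t, rfl⟩; exact hB1 t
  · rintro f ⟨t, rfl⟩; exact hH (hB1 t)
  · have h := Cardinal.mk_range_eq_of_injective hFFinj
    have h2 : Cardinal.mk (ℕ → Bool) = Cardinal.continuum := by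
      simp [Cardinal.mk_arrow, ← Cardinal.two_power_aleph0]
    rw [h2, Cardinal.lift_continuum, Cardinal.lift_uzero] at h
    exact h
  · exact hclosed.preimage continuous_subtype_val
  · rintro f ⟨t, rfl⟩ w ⟨x, rfl⟩
    exact hFrange t x
end
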